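/- arXiv:1006.3627 — 9 statements merged into one kernel-verified Lean document; each statement's English description precedes it below -/
import Mathlib

section
/- Let S be a linear subspace of ℝ^s, b ∈ ℝ^s a point with all coordinates strictly positive, and z ∈ S + b a point with all coordinates nonnegative. Define α ∈ {0,1}^s by α_i = 1 if z_i > 0 and α_i = 0 otherwise. Then the set (α + S) ∩ ℝ^s_{≥0} contains a point with all coordinates strictly positive. -/
open MvPolynomial Relation

/-- A chemical reaction network on `s` species: a finite directed graph whose
vertices are labeled by distinct monomials (exponent vectors). -/
structure CRN (s : ℕ) where
  n : ℕ
  edge : Fin n → Fin n → Prop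
  ψ : Fin n → (Fin s → ℕ)
  inj : Function.Injective ψ

variable {s : ℕ}

/-- Weak reversibility: every connected component of the reaction graph is
strongly connected, i.e. undirected reachability implies directed reachability. -/
def CRN.weaklyReversible (G : CRN s) : Prop :=
  ∀ i j, Relation.ReflTransGen (fun a b => G.edge a b ∨ G.edge b a) i j →
    Relation.ReflTransGen G.edge i j

/-- Directed edge of the event-graph: `(N·ψ i, N·ψ j)` for an edge `(i,j)` of `G`
and a monic monomial `N` (exponent vector `c`). -/
def CRN.eventEdge (G : CRN s) (M N : Fin s → ℕ) : Prop :=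
  ∃ i j c, G.edge i j ∧ M = c + G.ψ i ∧ N = c + G.ψ j

/-- Directed reachability in the event-graph. -/
def CRN.eventReach (G : CRN s) (M N : Fin s → ℕ) : Prop :=
  Relation.ReflTransGen G.eventEdge M N

/-- Path-connectedness (in the undirected sense) in the event-graph. -/
def CRN.connected (G : CRN s) (M N : Fin s → ℕ) : Prop :=
  Relation.ReflTransGen (fun a b => G.eventEdge a b ∨ G.eventEdge b a) M N

/-- gcd of two monomials, as exponent vectors. -/
def mgcd (M N : Fin s → ℕ) : Fin s → ℕ := fun i => min (M i) (N i)

/-- A weakly-reversible CRN is catalytic iff some path-connected monomials `M, N`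
in the event-graph become disconnected after dividing by their gcd. -/
def CRN.catalytic (G : CRN s) : Prop :=
  ∃ M N : Fin s → ℕ, G.connected M N ∧
    ¬ G.connected (M - mgcd M N) (N - mgcd M N)

/-- The monic monomial with exponent vector `e`, as a polynomial. -/
noncomputable def mon (k : Type*) [CommSemiring k] (e : Fin s → ℕ) :
    MvPolynomial (Fin s) k :=
  MvPolynomial.monomial (Finsupp.equivFunOnFinite.symm e) 1

/-- The set of binomials of the associated event-system `E_G` (one binomial for
each edge of the underlying undirected graph of `G`). -/
def CRN.eventSystem (G : CRN s) (k : Type*) [CommRing k] :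
    Set (MvPolynomial (Fin s) k) :=
  {p | ∃ i j, (G.edge i j ∨ G.edge j i) ∧ p = mon k (G.ψ i) - mon k (G.ψ j)}

/-- The ideal `(E_G)` generated by the associated event-system. -/
noncomputable def CRN.eventIdeal (G : CRN s) (k : Type*) [CommRing k] :
    Ideal (MvPolynomial (Fin s) k) :=
  Ideal.span (G.eventSystem k)

/-- The stoichiometric subspace of `G`. -/
def CRN.stoich (G : CRN s) : Submodule ℝ (Fin s → ℝ) :=
  Submodule.span ℝ
    {v | ∃ i j, G.edge i j ∧ v = fun t => (G.ψ j t : ℝ) - (G.ψ i t : ℝ)}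

/-- `Z` is a siphon of `G`. -/
def CRN.siphon (G : CRN s) (Z : Set (Fin s)) : Prop :=
  Z.Nonempty ∧ ∀ i j, G.edge i j →
    (∃ l ∈ Z, G.ψ j l ≠ 0) → (∃ l ∈ Z, G.ψ i l ≠ 0)

/-- `Z` is a critical siphon of `G`: a siphon whose zero pattern is realized by a
nonnegative point whose invariant polyhedron meets the positive orthant. -/
def CRN.criticalSiphon (G : CRN s) (Z : Set (Fin s)) : Prop :=
  G.siphon Z ∧ ∃ z : Fin s → ℝ, (∀ i, 0 ≤ z i) ∧ Z = {i | z i = 0} ∧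
    ∃ p : Fin s → ℝ, (∀ i, 0 < p i) ∧ p - z ∈ G.stoich

/-- The underlying undirected CRN (every reaction made reversible). -/
def CRN.sym (G : CRN s) : CRN s :=
  ⟨G.n, fun i j => G.edge i j ∨ G.edge j i, G.ψ, G.inj⟩

/-- A point `a` is a zero of all binomials in the event-system of `G`. -/
def CRN.vanishesAt (G : CRN s) {k : Type*} [CommRing k] (a : Fin s → k) : Prop :=
  ∀ i j, G.edge i j → ∏ t, a t ^ G.ψ i t = ∏ t, a t ^ G.ψ j t

/-- The saturation `I : f^∞`, as a set. -/
def satSet {R : Type*} [CommRing R] (I : Ideal R) (f : R) : Set R :=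
  {g | ∃ m : ℕ, 0 < m ∧ f ^ m * g ∈ I}

/-- Lemma 4.7 (linear algebra): the 0/1 pattern of a nonnegative point of `S + b`
(`b` positive) has an invariant polyhedron meeting the positive orthant. -/
theorem indicator_polyhedron_meets_positive {s : ℕ}
    (S : Submodule ℝ (Fin s → ℝ)) (b z : Fin s → ℝ)
    (hb : ∀ i, 0 < b i) (hz : ∀ i, 0 ≤ z i) (hzS : z - b ∈ S) :
    ∃ d : Fin s → ℝ, (∀ i, 0 < d i) ∧
      d - (fun i => if 0 < z i then (1 : ℝ) else 0) ∈ S := by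
  set α : Fin s → ℝ := fun i => if 0 < z i then (1 : ℝ) else 0 with hα
  set C : ℝ := 1 + ∑ i, |z i - b i| with hC
  have hCpos : 0 < C := by positivity
  set ε : ℝ := C⁻¹ with hε
  have hεpos : 0 < ε := inv_pos.mpr hCpos
  have hbound : ∀ i, ε * |z i - b i| < 1 := by
    intro i
    have h1 : |z i - b i| ≤ ∑ j, |z j - b j| :=
      Finset.single_le_sum (f := fun j => |z j - b j|)
        (fun j _ => abs_nonneg _) (Finset.mem_univ i)
    have h2 : |z i - b i| < C := by rw [hC]; linarith
    calc ε * |z i - b i| < ε * C := by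
          apply mul_lt_mul_of_pos_left h2 hεpos
      _ = 1 := inv_mul_cancel₀ (ne_of_gt hCpos)
  refine ⟨α + ε • (b - z), ?_, ?_⟩
  · intro i
    simp only [Pi.add_apply, Pi.smul_apply, Pi.sub_apply, smul_eq_mul, hα]
    by_cases h : 0 < z i
    · simp only [h, if_true]
      have := hbound i
      have habs : ε * (z i - b i) ≤ ε * |z i - b i| :=
        mul_le_mul_of_nonneg_left (le_abs_self _) (le_of_lt hεpos)
      nlinarith
    · simp only [h, if_false]
      have hzi : z i = 0 := le_antisymm (not_lt.mp h) (hz i)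
      have := hb i
      rw [hzi]
      nlinarith
  · have : α + ε • (b - z) - α = ε • (b - z) := by abel
    rw [this]
    exact S.smul_mem ε (by simpa using S.neg_mem hzS)
end

section
/- Let G be a weakly-reversible CRN with associated event-system E_G. If M and N are distinct monic monomials with M − N in the ideal (E_G), then M and N are path-connected in the event-graph of G. -/
open MvPolynomial Relation

variable {s : ℕ}

lemma eventEdge_add (G : CRN s) (c : Fin s → ℕ) {a b : Fin s → ℕ}
    (h : G.eventEdge a b) : G.eventEdge (a + c) (b + c) := by
  obtain ⟨i, j, d, he, ha, hb⟩ := h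
  exact ⟨i, j, d + c, he, by simp [ha, add_right_comm], by simp [hb, add_right_comm]⟩

lemma connected_add (G : CRN s) (c : Fin s → ℕ) {a b : Fin s → ℕ}
    (h : G.connected a b) : G.connected (a + c) (b + c) :=
  Relation.ReflTransGen.lift (· + c)
    (fun _ _ hh => hh.imp (eventEdge_add G c) (eventEdge_add G c)) _ _ h

lemma connected_symm (G : CRN s) : Symmetric G.connected :=
  fun a b h => by
    haveI : Std.Symm (fun a b => G.eventEdge a b ∨ G.eventEdge b a) := ⟨fun _ _ h => h.symm⟩
    exact (Relation.ReflTransGen.stdSymm (r := fun a b => G.eventEdge a b ∨ G.eventEdge b a)).symm a b h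

/-- The congruence on exponent vectors induced by event-graph connectedness. -/
def CRN.con (G : CRN s) : AddCon (Fin s → ℕ) where
  r := G.connected
  iseqv := ⟨fun _ => .refl, fun h => connected_symm G h, fun h1 h2 => h1.trans h2⟩
  add' := fun {w x y z} h1 h2 =>
    (connected_add G y h1).trans (by
      have := connected_add G x h2
      simpa [add_comm, CRN.connected] using this)

/-- If the difference of two distinct monic monomials lies in `(E_G)`, then the
monomials are path-connected in the event-graph. -/
theorem mem_eventIdeal_imp_connected {k : Type*} [Field k] [CharZero k] {s : ℕ}
    (G : CRN s) (hwr : G.weaklyReversible) (M N : Fin s → ℕ) (hMN : M ≠ N)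
    (h : mon k M - mon k N ∈ G.eventIdeal k) :
    G.connected M N := by
  classical
  -- the additive monoid hom from exponent finsupps to the quotient monoid
  set f : (Fin s →₀ ℕ) →+ G.con.Quotient :=
    (AddCon.mk' G.con).comp (Finsupp.coeFnAddHom (ι := Fin s) (M := ℕ))
  -- the induced ring hom on monoid algebras
  set φ : MvPolynomial (Fin s) k →+* AddMonoidAlgebra k G.con.Quotient :=
    AddMonoidAlgebra.mapDomainRingHom k f
  have hφmon : ∀ e : Fin s → ℕ,
      φ (mon k e) = AddMonoidAlgebra.single ((e : Fin s → ℕ) : G.con.Quotient) (1 : k) := by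
    intro e
    have : mon k e = AddMonoidAlgebra.single (Finsupp.equivFunOnFinite.symm e) (1 : k) := by
      rw [mon, MvPolynomial.single_eq_monomial]
    show AddMonoidAlgebra.mapDomain f (mon k e) = _
    rw [this, AddMonoidAlgebra.mapDomain_single]
    congr 1
  -- generators vanish under φ
  have hker : G.eventSystem k ⊆ (RingHom.ker φ : Ideal (MvPolynomial (Fin s) k)) := by
    rintro p ⟨i, j, he, rfl⟩
    have hconn : G.connected (G.ψ i) (G.ψ j) := by
      rcases he with he | he
      · exact Relation.ReflTransGen.single
          (Or.inl ⟨i, j, 0, he, (zero_add _).symm, (zero_add _).symm⟩)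
      · exact Relation.ReflTransGen.single
          (Or.inr ⟨j, i, 0, he, (zero_add _).symm, (zero_add _).symm⟩)
    have hq : ((G.ψ i : Fin s → ℕ) : G.con.Quotient) = ((G.ψ j : Fin s → ℕ) : G.con.Quotient) :=
      (AddCon.eq G.con).mpr hconn
    simp only [SetLike.mem_coe, RingHom.mem_ker, map_sub, hφmon, hq, sub_self]
  have hspan : G.eventIdeal k ≤ RingHom.ker φ := Ideal.span_le.mpr hker
  have h0 : φ (mon k M - mon k N) = 0 := hspan h
  rw [map_sub, hφmon, hφmon, sub_eq_zero] at h0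
  have := AddMonoidAlgebra.single_inj.mp h0
  rcases this with ⟨hq, -⟩ | ⟨h1, -⟩
  · exact (AddCon.eq G.con).mp hq
  · exact absurd h1 one_ne_zero
end

section
/- A weakly-reversible CRN G is catalytic if and only if the ideal (E_G) is strictly contained in its saturation (E_G) : (x_1·x_2·...·x_s)^∞. -/
open MvPolynomial Relation

variable {s : ℕ}

-- ===================== auxiliary development =====================
namespace CatalysisAux

variable {s : ℕ}

lemma conn_refl (G : CRN s) (a : Fin s → ℕ) : G.connected a a := ReflTransGen.refl

lemma conn_symm (G : CRN s) : Symmetric G.connected :=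
  fun a b h => by
    haveI : Std.Symm (fun a b => G.eventEdge a b ∨ G.eventEdge b a) := ⟨fun _ _ h => h.symm⟩
    exact (Relation.ReflTransGen.symmetric (r := fun a b => G.eventEdge a b ∨ G.eventEdge b a)).symm a b h

lemma conn_trans (G : CRN s) {a b c : Fin s → ℕ} (h : G.connected a b)
    (h' : G.connected b c) : G.connected a c := h.trans h'

lemma eventEdge_add (G : CRN s) {a b : Fin s → ℕ} (c : Fin s → ℕ)
    (h : G.eventEdge a b) : G.eventEdge (a + c) (b + c) := by
  obtain ⟨i, j, d, he, ha, hb⟩ := h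
  exact ⟨i, j, d + c, he, by rw [ha]; funext t; simp [add_comm, add_assoc, add_left_comm],
    by rw [hb]; funext t; simp [add_comm, add_assoc, add_left_comm]⟩

lemma conn_add (G : CRN s) {a b : Fin s → ℕ} (c : Fin s → ℕ)
    (h : G.connected a b) : G.connected (a + c) (b + c) := by
  refine Relation.ReflTransGen.lift (· + c) (fun x y hxy => ?_) _ _ h
  rcases hxy with h' | h'
  · exact Or.inl (eventEdge_add G c h')
  · exact Or.inr (eventEdge_add G c h')

/-- The setoid of connectivity in the event graph. -/
def st (G : CRN s) : Setoid (Fin s → ℕ) :=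
  ⟨G.connected, ⟨conn_refl G, fun h => conn_symm G h, fun h h' => conn_trans G h h'⟩⟩

/-- The quotient monoid. -/
def Q (G : CRN s) : Type := Quotient (st G)

def qmk (G : CRN s) (a : Fin s → ℕ) : Q G := Quotient.mk (st G) a

instance (G : CRN s) : Add (Q G) :=
  ⟨Quotient.map₂ (· + ·) (fun a a' h b b' h' =>
    conn_trans G (conn_add G b h) (by
      have h2 := conn_add G a' h'
      rwa [add_comm b a', add_comm b' a'] at h2))⟩

instance (G : CRN s) : Zero (Q G) := ⟨qmk G 0⟩

instance (G : CRN s) : AddCommMonoid (Q G) where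
  add_assoc := by
    rintro ⟨a⟩ ⟨b⟩ ⟨c⟩
    exact congrArg (Quotient.mk _) (add_assoc a b c)
  zero_add := by rintro ⟨a⟩; exact congrArg (Quotient.mk _) (zero_add a)
  add_zero := by rintro ⟨a⟩; exact congrArg (Quotient.mk _) (add_zero a)
  add_comm := by rintro ⟨a⟩ ⟨b⟩; exact congrArg (Quotient.mk _) (add_comm a b)
  nsmul := nsmulRec

lemma qmk_add (G : CRN s) (a b : Fin s → ℕ) : qmk G a + qmk G b = qmk G (a + b) := rfl

lemma qmk_eq_iff (G : CRN s) {a b : Fin s → ℕ} : qmk G a = qmk G b ↔ G.connected a b :=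
  ⟨fun h => Quotient.exact h, fun h => Quotient.sound h⟩

/-- The projection on exponents, as an `AddMonoidHom`. -/
def F (G : CRN s) : (Fin s →₀ ℕ) →+ Q G where
  toFun e := qmk G e
  map_zero' := congrArg (qmk G) (by ext t; simp)
  map_add' e e' := by
    rw [qmk_add]
    exact congrArg (qmk G) (by ext t; simp)

/-- The quotient map on monoid algebras. -/
noncomputable def φ (G : CRN s) (k : Type*) [CommRing k] :
    MvPolynomial (Fin s) k →+* AddMonoidAlgebra k (Q G) :=
  AddMonoidAlgebra.mapDomainRingHom k (F G)

lemma φ_apply (G : CRN s) (k : Type*) [CommRing k] (p : MvPolynomial (Fin s) k) :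
    φ G k p = AddMonoidAlgebra.mapDomain (F G) p := rfl

lemma φ_monomial (G : CRN s) (k : Type*) [CommRing k] (e : Fin s →₀ ℕ) (c : k) :
    φ G k (MvPolynomial.monomial e c) = AddMonoidAlgebra.single (qmk G e) c := by
  rw [φ_apply, ← MvPolynomial.single_eq_monomial, AddMonoidAlgebra.mapDomain_single]
  rfl

lemma φ_mon (G : CRN s) (k : Type*) [CommRing k] (a : Fin s → ℕ) :
    φ G k (mon k a) = AddMonoidAlgebra.single (qmk G a) (1 : k) := by
  rw [mon, φ_monomial]
  congr 1

lemma symm_add (a b : Fin s → ℕ) :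
    (Finsupp.equivFunOnFinite.symm (a + b) : Fin s →₀ ℕ)
      = Finsupp.equivFunOnFinite.symm a + Finsupp.equivFunOnFinite.symm b := by
  ext t; simp

lemma mon_mul (k : Type*) [CommRing k] (a b : Fin s → ℕ) :
    mon k a * mon k b = mon (s := s) k (a + b) := by
  rw [mon, mon, mon, MvPolynomial.monomial_mul, symm_add, one_mul]

lemma mon_zero (k : Type*) [CommRing k] : mon (s := s) k 0 = 1 := by
  rw [mon]
  have : (Finsupp.equivFunOnFinite.symm (0 : Fin s → ℕ)) = 0 := by ext t; simp
  rw [this, MvPolynomial.monomial_zero']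
  rfl

lemma prod_X_eq (k : Type*) [CommRing k] :
    (∏ i, MvPolynomial.X i : MvPolynomial (Fin s) k) = mon k (fun _ => 1) := by
  have h1 : ∀ i : Fin s, (MvPolynomial.X i : MvPolynomial (Fin s) k)
      = mon k (Pi.single i 1) := by
    intro i
    rw [MvPolynomial.X, mon]
    congr 1
    ext t
    simp [Finsupp.single_apply, Pi.single_apply, eq_comm]
  calc (∏ i, MvPolynomial.X i : MvPolynomial (Fin s) k)
      = ∏ i, mon k (Pi.single i 1) := by simp_rw [h1]
    _ = mon k (∑ i, Pi.single i 1) := by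
        classical
        induction (Finset.univ : Finset (Fin s)) using Finset.induction with
        | empty => simp [mon_zero]
        | insert a t hx ih => simp [Finset.prod_insert hx, Finset.sum_insert hx, ih, mon_mul]
    _ = mon k (fun _ => 1) := by
        congr 1
        funext j
        rw [Finset.sum_apply]
        simp [Pi.single_apply]

lemma mon_pow (k : Type*) [CommRing k] (a : Fin s → ℕ) (m : ℕ) :
    (mon k a) ^ m = mon (s := s) k (fun i => m * a i) := by
  induction m with
  | zero => rw [pow_zero, ← mon_zero k]; congr 1; funext i; simp
  | succ n ih =>
      rw [pow_succ, ih, mon_mul]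
      congr 1
      funext i
      simp [add_mul, Nat.succ_mul]

lemma prod_X_pow (k : Type*) [CommRing k] (m : ℕ) :
    ((∏ i, MvPolynomial.X i : MvPolynomial (Fin s) k)) ^ m = mon k (fun _ => m) := by
  rw [prod_X_eq, mon_pow]
  simp

end CatalysisAux

namespace CatalysisAux

variable {s : ℕ}

lemma mem_ideal_of_edge (G : CRN s) (k : Type*) [CommRing k] {a b : Fin s → ℕ}
    (h : G.eventEdge a b ∨ G.eventEdge b a) :
    mon k a - mon k b ∈ G.eventIdeal k := by
  rcases h with ⟨i, j, c, he, ha, hb⟩ | ⟨i, j, c, he, hb, ha⟩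
  · have hgen : mon k (G.ψ i) - mon k (G.ψ j) ∈ G.eventSystem k :=
      ⟨i, j, Or.inl he, rfl⟩
    have : mon (s := s) k c * (mon k (G.ψ i) - mon k (G.ψ j))
        = mon k a - mon k b := by
      rw [mul_sub, mon_mul, mon_mul, ha, hb]
    rw [← this]
    exact Ideal.mul_mem_left _ _ (Ideal.subset_span hgen)
  · have hgen : mon k (G.ψ j) - mon k (G.ψ i) ∈ G.eventSystem k :=
      ⟨j, i, Or.inr he, rfl⟩
    have : mon (s := s) k c * (mon k (G.ψ j) - mon k (G.ψ i))
        = mon k a - mon k b := by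
      rw [mul_sub, mon_mul, mon_mul, ha, hb]
    rw [← this]
    exact Ideal.mul_mem_left _ _ (Ideal.subset_span hgen)

lemma mem_ideal_of_conn (G : CRN s) (k : Type*) [CommRing k] {a b : Fin s → ℕ}
    (h : G.connected a b) : mon k a - mon k b ∈ G.eventIdeal k := by
  induction h with
  | refl => simpa using Ideal.zero_mem _
  | tail hab hbc ih =>
      rename_i x y
      have h2 := mem_ideal_of_edge G k hbc
      have : mon k a - mon k y = (mon k a - mon k x) + (mon k x - mon k y) := by ring
      rw [this]
      exact Ideal.add_mem _ ih h2

lemma ideal_le_ker (G : CRN s) (k : Type*) [CommRing k] :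
    G.eventIdeal k ≤ RingHom.ker (φ G k) := by
  rw [CRN.eventIdeal, Ideal.span_le]
  rintro p ⟨i, j, he, rfl⟩
  have hc : G.connected (G.ψ i) (G.ψ j) := by
    refine Relation.ReflTransGen.single ?_
    rcases he with he | he
    · exact Or.inl ⟨i, j, 0, he, by simp, by simp⟩
    · exact Or.inr ⟨j, i, 0, he, by simp, by simp⟩
  have : φ G k (mon k (G.ψ i) - mon k (G.ψ j)) = 0 := by
    rw [map_sub, φ_mon, φ_mon, qmk_eq_iff G |>.mpr hc, sub_self]
  exact this

/-- The "normal form" map choosing a representative in each class. -/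
noncomputable def τ (G : CRN s) : (Fin s →₀ ℕ) → (Fin s →₀ ℕ) :=
  fun e => Finsupp.equivFunOnFinite.symm (Quotient.out (qmk G e))

lemma conn_out (G : CRN s) (e : Fin s →₀ ℕ) :
    G.connected e (Quotient.out (qmk G e)) :=
  conn_symm G (Quotient.mk_out (s := st G) (e : Fin s → ℕ))

lemma monomial_sub_tau_mem (G : CRN s) (k : Type*) [CommRing k] (e : Fin s →₀ ℕ) :
    MvPolynomial.monomial e (1 : k) - MvPolynomial.monomial (τ G e) 1
      ∈ G.eventIdeal k := by
  have h := mem_ideal_of_conn G k (conn_out G e)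
  have h1 : mon k (e : Fin s → ℕ) = MvPolynomial.monomial e (1 : k) := by
    rw [mon]; congr 1; exact congrArg _ (Finsupp.equivFunOnFinite.symm_apply_apply e)
  have h2 : mon k (Quotient.out (qmk G e) : Fin s → ℕ)
      = MvPolynomial.monomial (τ G e) (1 : k) := rfl
  rwa [h1, h2] at h

/-- Normal form: replace each monomial by the chosen representative of its class. -/
noncomputable def nf (G : CRN s) (k : Type*) [CommRing k]
    (g : MvPolynomial (Fin s) k) : MvPolynomial (Fin s) k :=
  AddMonoidAlgebra.mapDomain (τ G) g

lemma nf_add (G : CRN s) (k : Type*) [CommRing k] (f g : MvPolynomial (Fin s) k) :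
    nf G k (f + g) = nf G k f + nf G k g := AddMonoidAlgebra.mapDomain_add _ _ _

lemma nf_zero (G : CRN s) (k : Type*) [CommRing k] : nf G k 0 = 0 :=
  AddMonoidAlgebra.mapDomain_zero _

lemma nf_single (G : CRN s) (k : Type*) [CommRing k] (e : Fin s →₀ ℕ) (c : k) :
    nf G k (AddMonoidAlgebra.single e c) = AddMonoidAlgebra.single (τ G e) c :=
  AddMonoidAlgebra.mapDomain_single

lemma sub_nf_mem (G : CRN s) (k : Type*) [CommRing k]
    (g : MvPolynomial (Fin s) k) : g - nf G k g ∈ G.eventIdeal k := by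
  induction g using AddMonoidAlgebra.induction_linear with
  | zero => rw [nf_zero]; simpa using Ideal.zero_mem _
  | add f g hf hg =>
      rw [nf_add]
      convert Ideal.add_mem _ hf hg using 1
      ring
  | single e c =>
      rw [nf_single]
      convert Ideal.mul_mem_left _ (MvPolynomial.C c) (monomial_sub_tau_mem G k e) using 1
      rw [mul_sub]
      simp [MvPolynomial.C_mul_monomial, MvPolynomial.single_eq_monomial]

lemma ker_le_ideal (G : CRN s) (k : Type*) [CommRing k]
    {g : MvPolynomial (Fin s) k} (h : φ G k g = 0) : g ∈ G.eventIdeal k := by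
  have h2 : nf G k g = 0 := by
    have hτ : τ G = (fun q => Finsupp.equivFunOnFinite.symm (Quotient.out q)) ∘ (F G) := rfl
    show AddMonoidAlgebra.mapDomain (τ G) g = 0
    have hcomp : AddMonoidAlgebra.mapDomain (τ G) g = AddMonoidAlgebra.mapDomain
        (fun q : Q G => Finsupp.equivFunOnFinite.symm (Quotient.out q)) (AddMonoidAlgebra.mapDomain (F G) g) := by
      rw [hτ]; apply AddMonoidAlgebra.coeff_injective; exact Finsupp.mapDomain_comp
    rw [hcomp]
    rw [φ_apply] at h
    rw [h, AddMonoidAlgebra.mapDomain_zero]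
  have h3 := sub_nf_mem G k g
  rwa [h2, sub_zero] at h3

lemma mem_ideal_iff (G : CRN s) (k : Type*) [CommRing k]
    (g : MvPolynomial (Fin s) k) : g ∈ G.eventIdeal k ↔ φ G k g = 0 :=
  ⟨fun h => ideal_le_ker G k h, ker_le_ideal G k⟩

end CatalysisAux

namespace CatalysisAux

variable {s : ℕ}

lemma single_one_mul (G : CRN s) (k : Type*) [CommRing k] (q : Q G)
    (f : AddMonoidAlgebra k (Q G)) :
    AddMonoidAlgebra.single q (1 : k) * f
      = AddMonoidAlgebra.mapDomain (fun x => q + x) f := by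
  induction f using AddMonoidAlgebra.induction_linear with
  | zero => rw [mul_zero, AddMonoidAlgebra.mapDomain_zero]
  | add f g hf hg => rw [mul_add, AddMonoidAlgebra.mapDomain_add, hf, hg]
  | single a b =>
      rw [AddMonoidAlgebra.single_mul_single, one_mul]
      exact (AddMonoidAlgebra.mapDomain_single).symm

lemma cancel_of_not_catalytic (G : CRN s) (h : ¬ G.catalytic) (c a b : Fin s → ℕ)
    (hc : G.connected (c + a) (c + b)) : G.connected a b := by
  rw [CRN.catalytic] at h
  push_neg at h
  have h1 := h _ _ hc
  have hg : mgcd (c + a) (c + b) = c + mgcd a b := by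
    funext i
    show min (c i + a i) (c i + b i) = c i + min (a i) (b i)
    exact min_add_add_left (c i) (a i) (b i)
  have ha : (c + a) - mgcd (c + a) (c + b) = a - mgcd a b := by
    rw [hg]; funext i
    show (c i + a i) - (c i + min (a i) (b i)) = a i - min (a i) (b i)
    exact Nat.add_sub_add_left _ _ _
  have hb : (c + b) - mgcd (c + a) (c + b) = b - mgcd a b := by
    rw [hg]; funext i
    show (c i + b i) - (c i + min (a i) (b i)) = b i - min (a i) (b i)
    exact Nat.add_sub_add_left _ _ _
  rw [ha, hb] at h1
  have h2 := conn_add G (mgcd a b) h1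
  have ha2 : a - mgcd a b + mgcd a b = a := by
    funext i; exact Nat.sub_add_cancel (min_le_left _ _)
  have hb2 : b - mgcd a b + mgcd a b = b := by
    funext i; exact Nat.sub_add_cancel (min_le_right _ _)
  rwa [ha2, hb2] at h2

end CatalysisAux

open CatalysisAux in
theorem catalytic_iff_ssubset_saturation' {k : Type*} [Field k] [CharZero k] {s : ℕ}
    (G : CRN s) (hwr : G.weaklyReversible) :
    G.catalytic ↔
      (G.eventIdeal k : Set (MvPolynomial (Fin s) k)) ⊂
        satSet (G.eventIdeal k) (∏ i, MvPolynomial.X i) := by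
  have hsub : (G.eventIdeal k : Set (MvPolynomial (Fin s) k))
      ⊆ satSet (G.eventIdeal k) (∏ i, MvPolynomial.X i) := by
    intro g hg
    exact ⟨1, one_pos, by rw [pow_one]; exact Ideal.mul_mem_left _ _ hg⟩
  constructor
  · rintro ⟨M, N, hMN, hnc⟩
    rw [Set.ssubset_def]
    refine ⟨hsub, fun hle => ?_⟩
    set g := mgcd M N with hgdef
    set w : MvPolynomial (Fin s) k := mon k (M - g) - mon k (N - g) with hw
    have hwsat : w ∈ satSet (G.eventIdeal k) (∏ i, MvPolynomial.X i) := by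
      set m : ℕ := (∑ i, g i) + 1 with hm
      refine ⟨m, Nat.succ_pos _, ?_⟩
      have hgle : ∀ i, g i ≤ m := by
        intro i
        have : g i ≤ ∑ j, g j :=
          Finset.single_le_sum (fun j _ => Nat.zero_le (g j)) (Finset.mem_univ i)
        omega
      have hrg : (fun i => m - g i) + g = fun _ => m := by
        funext i
        show (m - g i) + g i = m
        exact Nat.sub_add_cancel (hgle i)
      have hgM : g + (M - g) = M := by
        funext i; exact Nat.add_sub_cancel' (min_le_left _ _)
      have hgN : g + (N - g) = N := by
        funext i; exact Nat.add_sub_cancel' (min_le_right _ _)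
      have e1 : mon k M = mon (s := s) k g * mon k (M - g) := by rw [mon_mul, hgM]
      have e2 : mon k N = mon (s := s) k g * mon k (N - g) := by rw [mon_mul, hgN]
      have key : (∏ i, MvPolynomial.X i : MvPolynomial (Fin s) k) ^ m * w
          = mon k (fun i => m - g i) * (mon k M - mon k N) := by
        rw [prod_X_pow, hw, e1, e2, ← hrg, ← mon_mul]
        ring
      rw [key]
      exact Ideal.mul_mem_left _ _ (mem_ideal_of_conn G k hMN)
    have hwI : w ∈ G.eventIdeal k := hle hwsat
    have h0 : φ G k w = 0 := (mem_ideal_iff G k w).1 hwI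
    rw [hw, map_sub, φ_mon, φ_mon, sub_eq_zero] at h0
    rcases AddMonoidAlgebra.single_inj.1 h0 with ⟨hq, -⟩ | ⟨h1, -⟩
    · exact hnc ((qmk_eq_iff G).1 hq)
    · exact one_ne_zero h1
  · intro hss
    by_contra hcat
    have hsat : satSet (G.eventIdeal k) (∏ i, MvPolynomial.X i)
        ⊆ (G.eventIdeal k : Set (MvPolynomial (Fin s) k)) := by
      rintro g ⟨m, hm, hmem⟩
      have h0 : φ G k ((∏ i, MvPolynomial.X i : MvPolynomial (Fin s) k) ^ m * g) = 0 :=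
        (mem_ideal_iff G k _).1 hmem
      rw [CatalysisAux.prod_X_pow, map_mul, φ_mon, single_one_mul] at h0
      have hinj : Function.Injective
          (fun x : Q G => qmk G (fun _ => m) + x) := by
        intro x y hxy
        refine Quotient.inductionOn₂ x y (fun a b hab => ?_) hxy
        have hab' : qmk G ((fun _ => m) + a) = qmk G ((fun _ => m) + b) := hab
        exact Quotient.sound
          (cancel_of_not_catalytic G hcat _ a b ((qmk_eq_iff G).1 hab'))
      have h1 : φ G k g = 0 := by
        apply AddMonoidAlgebra.mapDomain_injective hinj
        rw [h0, AddMonoidAlgebra.mapDomain_zero]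
      exact (mem_ideal_iff G k g).2 h1
    rw [Set.ssubset_def] at hss
    exact hss.2 hsat

/-- `G` is catalytic iff `(E_G)` is strictly contained in its saturation with
respect to `x_1 ⋯ x_s`. -/
theorem catalytic_iff_ssubset_saturation {k : Type*} [Field k] [CharZero k] {s : ℕ}
    (G : CRN s) (hwr : G.weaklyReversible) :
    G.catalytic ↔
      (G.eventIdeal k : Set (MvPolynomial (Fin s) k)) ⊂
        satSet (G.eventIdeal k) (∏ i, MvPolynomial.X i) := by
  exact catalytic_iff_ssubset_saturation' G hwr
end

section
/- Let G be a weakly-reversible CRN. A set Z ⊆ {1,...,s} is a siphon of G if and only if there exists a point α ∈ ℝ^s_{≥0} vanishing on all binomials in E_G with Z = {i : α_i = 0}. Moreover Z is a critical siphon if and only if such an α exists whose invariant polyhedron (α + S_G) ∩ ℝ^s_{≥0} intersects the positive orthant. -/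
open MvPolynomial Relation

variable {s : ℕ}

lemma crn_siphon_prop (G : CRN s) {Z : Set (Fin s)} (hs : G.siphon Z)
    {j i : Fin G.n} (h : Relation.ReflTransGen G.edge j i)
    (hi : ∃ l ∈ Z, G.ψ i l ≠ 0) : ∃ l ∈ Z, G.ψ j l ≠ 0 := by
  induction h with
  | refl => exact hi
  | tail _ hbc ih => exact ih (hs.2 _ _ hbc hi)

open Classical in
lemma crn_prod_indicator {s : ℕ} (Z : Set (Fin s)) (e : Fin s → ℕ) :
    (∏ t, (if t ∈ Z then (0:ℝ) else 1) ^ e t)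
      = if ∃ l ∈ Z, e l ≠ 0 then 0 else 1 := by
  split_ifs with h
  · obtain ⟨l, hl, hel⟩ := h
    exact Finset.prod_eq_zero (Finset.mem_univ l) (by simp [hl, zero_pow hel])
  · push_neg at h
    apply Finset.prod_eq_one
    intro t _
    by_cases ht : t ∈ Z
    · simp [h t ht]
    · simp [ht]

/-- Siphons are exactly the zero patterns of nonnegative zeros of `E_G`, and
critical siphons correspond to critical siphon-points. -/
theorem siphon_iff_siphonPoint {s : ℕ} (G : CRN s) (hwr : G.weaklyReversible)
    (Z : Set (Fin s)) (hZ : Z.Nonempty) :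
    (G.siphon Z ↔ ∃ α : Fin s → ℝ, (∀ i, 0 ≤ α i) ∧ G.vanishesAt α ∧
        Z = {i | α i = 0}) ∧
    (G.criticalSiphon Z ↔ ∃ α : Fin s → ℝ, (∀ i, 0 ≤ α i) ∧ G.vanishesAt α ∧
        Z = {i | α i = 0} ∧
        ∃ p : Fin s → ℝ, (∀ i, 0 < p i) ∧ p - α ∈ G.stoich) := by
  classical
  -- the canonical witness: indicator of the complement of Z
  have mk : ∀ Z' : Set (Fin s), G.siphon Z' →
      ((∀ i, (0:ℝ) ≤ (if i ∈ Z' then (0:ℝ) else 1)) ∧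
        G.vanishesAt (fun i => if i ∈ Z' then (0:ℝ) else 1) ∧
        Z' = {i | (if i ∈ Z' then (0:ℝ) else 1) = 0}) := by
    intro Z' hs
    refine ⟨fun i => by split_ifs <;> norm_num, ?_, ?_⟩
    · intro i j hij
      show (∏ t, (if t ∈ Z' then (0:ℝ) else 1) ^ G.ψ i t)
        = ∏ t, (if t ∈ Z' then (0:ℝ) else 1) ^ G.ψ j t
      rw [crn_prod_indicator, crn_prod_indicator]
      by_cases hj : ∃ l ∈ Z', G.ψ j l ≠ 0
      · have hi := hs.2 i j hij hj
        simp [hi, hj]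
      · have hji : Relation.ReflTransGen G.edge j i :=
          hwr j i (Relation.ReflTransGen.single (Or.inr hij))
        have hi : ¬ ∃ l ∈ Z', G.ψ i l ≠ 0 := fun hi => hj (crn_siphon_prop G hs hji hi)
        simp [hi, hj]
    · ext i
      by_cases h : i ∈ Z' <;> simp [h]
  have back : ∀ α : Fin s → ℝ, G.vanishesAt α → Z = {i | α i = 0} → G.siphon Z := by
    intro α hv hZα
    refine ⟨hZ, fun i j hij hj => ?_⟩
    obtain ⟨l, hl, hψ⟩ := hj
    have hαl : α l = 0 := by rw [hZα] at hl; exact hl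
    have hj0 : (∏ t, α t ^ G.ψ j t) = 0 :=
      Finset.prod_eq_zero (Finset.mem_univ l) (by simp [hαl, zero_pow hψ])
    have hi0 : (∏ t, α t ^ G.ψ i t) = 0 := by rw [hv i j hij, hj0]
    obtain ⟨t, -, ht⟩ := Finset.prod_eq_zero_iff.mp hi0
    have hψt : G.ψ i t ≠ 0 := by
      rintro h; rw [h, pow_zero] at ht; exact one_ne_zero ht
    have hαt : α t = 0 := (pow_eq_zero_iff hψt).mp ht
    exact ⟨t, by rw [hZα]; exact hαt, hψt⟩
  have part1 : G.siphon Z ↔ ∃ α : Fin s → ℝ, (∀ i, 0 ≤ α i) ∧ G.vanishesAt α ∧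
      Z = {i | α i = 0} := by
    constructor
    · intro hs
      exact ⟨_, mk Z hs⟩
    · rintro ⟨α, -, hv, hZα⟩
      exact back α hv hZα
  refine ⟨part1, ?_, ?_⟩
  · rintro ⟨hs, z, hz0, hZz, p, hp, hps⟩
    obtain ⟨hα0, hv, hZα⟩ := mk Z hs
    set α : Fin s → ℝ := fun i => if i ∈ Z then (0:ℝ) else 1 with hαdef
    obtain ⟨l0, hl0⟩ := hZ
    have hne : (Finset.univ : Finset (Fin s)).Nonempty := ⟨l0, Finset.mem_univ _⟩
    set g : Fin s → ℝ := fun i => if α i = 0 then 1 else α i / (1 + |p i - z i|) with hg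
    have hgpos : ∀ i, 0 < g i := by
      intro i
      simp only [hg]
      split_ifs with h
      · norm_num
      · have : 0 < α i := lt_of_le_of_ne (hα0 i) (Ne.symm h)
        positivity
    obtain ⟨i0, -, hmin⟩ := Finset.exists_min_image Finset.univ g hne
    set t := g i0 with htdef
    have ht0 : 0 < t := hgpos i0
    refine ⟨α, hα0, hv, hZα, fun i => α i + t * (p i - z i), ?_, ?_⟩
    · intro i
      show 0 < α i + t * (p i - z i)
      by_cases hiZ : i ∈ Z
      · have hαi : α i = 0 := by simp [hαdef, hiZ]
        have hzi : z i = 0 := by rw [hZz] at hiZ; exact hiZ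
        rw [hαi, hzi]
        have := hp i
        nlinarith
      · have hαi : α i = 1 := by simp [hαdef, hiZ]
        have hti : t ≤ g i := hmin i (Finset.mem_univ i)
        have hgi : g i = 1 / (1 + |p i - z i|) := by simp [hg, hαdef, hiZ]
        have habs : (0:ℝ) ≤ |p i - z i| := abs_nonneg _
        have h1 : t * |p i - z i| ≤ (1 / (1 + |p i - z i|)) * |p i - z i| :=
          mul_le_mul_of_nonneg_right (hgi ▸ hti) habs
        have h2 : (1 / (1 + |p i - z i|)) * |p i - z i| < 1 := by
          rw [div_mul_eq_mul_div, div_lt_iff₀ (by positivity)]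
          nlinarith
        have h3 := neg_abs_le (p i - z i)
        have h4 : t * (p i - z i) ≥ -(t * |p i - z i|) := by nlinarith
        rw [hαi]; linarith
    · have : (fun i => α i + t * (p i - z i)) - α = t • (p - z) := by
        funext i
        simp [mul_comm]
      rw [this]
      exact Submodule.smul_mem _ _ hps
  · rintro ⟨α, hα0, hv, hZα, p, hp, hpα⟩
    exact ⟨back α hv hZα, α, hα0, hZα, p, hp, hpα⟩
end

section
/- Let G be a weakly-reversible, non-catalytic CRN. Then the set of positive real zeros V_ℝ(E_G) ∩ ℝ^s_{>0} is dense (in the Euclidean topology) in the set of nonnegative real zeros V_ℝ(E_G) ∩ ℝ^s_{≥0}. -/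
open MvPolynomial Relation

variable {s : ℕ}

section AuxDense

open Finset

section RationalLinearAlgebra

variable {m : ℕ}

/-- Coordinatewise cast of a rational vector to a real vector. -/
def rc {m : ℕ} (u : Fin m → ℚ) : Fin m → ℝ := fun t => (u t : ℝ)

/-- Dot product as a linear functional. -/
def dotL (F : Type*) [CommRing F] {m : ℕ} (b : Fin m → F) : (Fin m → F) →ₗ[F] F where
  toFun x := ∑ t, b t * x t
  map_add' x y := by simp [mul_add, Finset.sum_add_distrib]
  map_smul' c x := by
    simp only [Pi.smul_apply, smul_eq_mul, RingHom.id_apply, Finset.mul_sum]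
    exact Finset.sum_congr rfl fun t _ => by ring

@[simp] lemma dotL_apply {F : Type*} [CommRing F] (b x : Fin m → F) :
    dotL F b x = ∑ t, b t * x t := rfl

lemma sum_mul_single {F : Type*} [CommRing F] (c : Fin m → F) (t' : Fin m) :
    ∑ t, c t * (Pi.single t' (1 : F) : Fin m → F) t = c t' := by
  simp [Pi.single_apply, mul_ite, Finset.sum_ite_eq']

lemma single_dot {F : Type*} [CommRing F] (u : Fin m → F) (t : Fin m) :
    ∑ t'', (Pi.single t (1 : F) : Fin m → F) t'' * u t'' = u t := by
  simp [Pi.single_apply, ite_mul, Finset.sum_ite_eq]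

/-- Core step: intersecting a real span of rational vectors with a rational hyperplane. -/
lemma lemS (U : Submodule ℚ (Fin m → ℚ)) (b : Fin m → ℚ) (x : Fin m → ℝ)
    (hx : x ∈ Submodule.span ℝ (rc '' (U : Set (Fin m → ℚ))))
    (hb : ∑ t, (b t : ℝ) * x t = 0) :
    x ∈ Submodule.span ℝ
      (rc '' ((U ⊓ LinearMap.ker (dotL ℚ b) : Submodule ℚ (Fin m → ℚ)) : Set (Fin m → ℚ))) := by
  by_cases hall : ∀ u ∈ U, dotL ℚ b u = 0
  · have hEq : (U ⊓ LinearMap.ker (dotL ℚ b) : Submodule ℚ (Fin m → ℚ)) = U :=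
      le_antisymm inf_le_left (le_inf le_rfl fun u hu => hall u hu)
    rw [hEq]; exact hx
  · push_neg at hall
    obtain ⟨u0, hu0U, hc0⟩ := hall
    set c0 : ℚ := dotL ℚ b u0 with hc0def
    let ρ : (Fin m → ℝ) →ₗ[ℝ] (Fin m → ℝ) :=
      LinearMap.id - ((c0 : ℝ))⁻¹ • ((dotL ℝ (fun t => (b t : ℝ))).smulRight (rc u0))
    have hc0R : ((c0 : ℝ)) ≠ 0 := by exact_mod_cast hc0
    have hrho : ∀ u ∈ U, ρ (rc u) ∈ Submodule.span ℝ
        (rc '' ((U ⊓ LinearMap.ker (dotL ℚ b) : Submodule ℚ (Fin m → ℚ)) : Set (Fin m → ℚ))) := by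
      intro u hu
      have key : ρ (rc u) = rc (u - ((dotL ℚ b u) / c0) • u0) := by
        funext t
        simp only [ρ, LinearMap.sub_apply, LinearMap.id_apply, LinearMap.smul_apply,
          LinearMap.smulRight_apply, Pi.sub_apply, Pi.smul_apply, smul_eq_mul, rc,
          dotL_apply]
        push_cast
        ring
      rw [key]
      refine Submodule.subset_span ⟨_, ?_, rfl⟩
      refine ⟨U.sub_mem hu (U.smul_mem _ hu0U), ?_⟩
      have : dotL ℚ b (u - (dotL ℚ b u / c0) • u0) = 0 := by
        rw [map_sub, map_smul, smul_eq_mul, ← hc0def]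
        field_simp
        ring
      simpa [LinearMap.mem_ker] using this
    have hx' : ρ x = x := by
      funext t
      simp only [ρ, LinearMap.sub_apply, LinearMap.id_apply, LinearMap.smul_apply,
        LinearMap.smulRight_apply, Pi.sub_apply, Pi.smul_apply, smul_eq_mul, dotL_apply, hb]
      simp
    have hmem : ρ x ∈ Submodule.map ρ (Submodule.span ℝ (rc '' (U : Set (Fin m → ℚ)))) :=
      Submodule.mem_map_of_mem hx
    rw [Submodule.map_span] at hmem
    rw [← hx']
    refine Submodule.span_le.mpr ?_ hmem
    rintro _ ⟨_, ⟨u, hu, rfl⟩, rfl⟩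
    exact hrho u hu

lemma lemS_list (l : List (Fin m → ℚ)) (U : Submodule ℚ (Fin m → ℚ)) (x : Fin m → ℝ)
    (hx : x ∈ Submodule.span ℝ (rc '' (U : Set (Fin m → ℚ))))
    (hl : ∀ b ∈ l, ∑ t, (b t : ℝ) * x t = 0) :
    ∃ Q : Submodule ℚ (Fin m → ℚ), Q ≤ U ∧ (∀ u ∈ Q, ∀ b ∈ l, dotL ℚ b u = 0) ∧
      x ∈ Submodule.span ℝ (rc '' (Q : Set (Fin m → ℚ))) := by
  induction l generalizing U with
  | nil => exact ⟨U, le_rfl, by simp, hx⟩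
  | cons b l ih =>
    have hx' := lemS U b x hx (hl b (List.mem_cons_self))
    obtain ⟨Q, hQle, hQker, hQx⟩ :=
      ih (U ⊓ LinearMap.ker (dotL ℚ b)) hx' (fun b' hb' => hl b' (List.mem_cons_of_mem _ hb'))
    refine ⟨Q, hQle.trans inf_le_left, fun u hu b' hb' => ?_, hQx⟩
    rcases List.mem_cons.mp hb' with rfl | h
    · exact (hQle hu).2
    · exact hQker u hu b' h

lemma rat_approx (Q : Submodule ℚ (Fin m → ℚ)) (x : Fin m → ℝ)
    (hx : x ∈ Submodule.span ℝ (rc '' (Q : Set (Fin m → ℚ))))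
    (T : Finset (Fin m)) (hT : ∀ t ∈ T, 0 < x t) :
    ∃ u ∈ Q, ∀ t ∈ T, 0 < u t := by
  rw [Submodule.mem_span_set'] at hx
  obtain ⟨k, r, g, hsum⟩ := hx
  have hgm : ∀ i, ∃ u, u ∈ Q ∧ rc u = (g i : Fin m → ℝ) := by
    intro i
    rcases (g i).2 with ⟨u, hu, hru⟩
    exact ⟨u, hu, hru⟩
  choose u huQ hurc using hgm
  let F : (Fin k → ℝ) → (Fin m → ℝ) := fun r' t => ∑ i, r' i * (u i t : ℝ)
  have hFx : F r = x := by
    funext t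
    have h1 := congrFun hsum t
    simp only [Finset.sum_apply, Pi.smul_apply, smul_eq_mul] at h1
    rw [← h1]
    refine Finset.sum_congr rfl fun i _ => ?_
    rw [← hurc i]
    rfl
  have hopen : IsOpen {r' : Fin k → ℝ | ∀ t ∈ T, 0 < F r' t} := by
    have hEq : {r' : Fin k → ℝ | ∀ t ∈ T, 0 < F r' t} = ⋂ t ∈ T, {r' | 0 < F r' t} := by
      ext r'; simp
    rw [hEq]
    refine isOpen_biInter_finset fun t _ => ?_
    have hc : Continuous fun r' : Fin k → ℝ => F r' t :=
      continuous_finset_sum _ fun i _ => (continuous_apply i).mul continuous_const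
    exact isOpen_lt continuous_const hc
  have hdense : Dense {r' : Fin k → ℝ | ∀ i, ∃ q : ℚ, r' i = (q : ℝ)} := by
    have hEq : {r' : Fin k → ℝ | ∀ i, ∃ q : ℚ, r' i = (q : ℝ)}
        = Set.pi Set.univ (fun _ : Fin k => Set.range (fun q : ℚ => (q : ℝ))) := by
      ext r'; simp [Set.mem_pi, eq_comm]
    rw [hEq]
    exact dense_pi Set.univ fun i _ => Rat.denseRange_cast
  have hne : ({r' : Fin k → ℝ | ∀ t ∈ T, 0 < F r' t}).Nonempty := by
    refine ⟨r, fun t ht => ?_⟩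
    rw [hFx]; exact hT t ht
  obtain ⟨r', hr'rat, hr'mem⟩ := hdense.exists_mem_open hopen hne
  choose q hq using hr'rat
  refine ⟨∑ i, q i • u i, Submodule.sum_mem _ fun i _ => Q.smul_mem _ (huQ i), ?_⟩
  intro t ht
  have hcast : (((∑ i, q i • u i) t : ℚ) : ℝ) = F r' t := by
    simp only [Finset.sum_apply, Pi.smul_apply, smul_eq_mul, F]
    push_cast
    exact Finset.sum_congr rfl fun i _ => by rw [hq i]
  have := hr'mem t ht
  rw [← hcast] at this
  exact_mod_cast this

lemma dual_pi {ι : Type*} [Fintype ι] [DecidableEq ι] (f : (ι → ℝ) →ₗ[ℝ] ℝ) (x : ι → ℝ) :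
    f x = ∑ i, x i * f (Pi.single i 1 : ι → ℝ) := by
  have hx : x = ∑ i, x i • (Pi.single i (1 : ℝ) : ι → ℝ) := by
    funext j
    simp [Finset.sum_apply, Pi.single_apply, mul_ite, Finset.sum_ite_eq']
  calc f x = f (∑ i, x i • (Pi.single i (1 : ℝ) : ι → ℝ)) := by rw [← hx]
    _ = ∑ i, x i * f (Pi.single i 1 : ι → ℝ) := by rw [map_sum]; simp

lemma exists_factor {V W : Type*} [AddCommGroup V] [Module ℝ V] [AddCommGroup W] [Module ℝ W]
    (Λ : V →ₗ[ℝ] W) (f : V →ₗ[ℝ] ℝ) (hker : ∀ v, Λ v = 0 → f v = 0) :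
    ∃ g : W →ₗ[ℝ] ℝ, ∀ v, g (Λ v) = f v := by
  have hle : LinearMap.ker Λ ≤ LinearMap.ker f := fun v hv => hker v hv
  let fbar := (LinearMap.ker Λ).liftQ f hle
  let e := Λ.quotKerEquivRange
  obtain ⟨g, hg⟩ := LinearMap.exists_extend (fbar.comp e.symm.toLinearMap)
  refine ⟨g, fun v => ?_⟩
  have h1 : (⟨Λ v, LinearMap.mem_range_self Λ v⟩ : LinearMap.range Λ)
      = e (Submodule.Quotient.mk v) := by
    apply Subtype.ext
    simp [e, LinearMap.quotKerEquivRange_apply_mk]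
  have h2 : g (Λ v) = (g.comp (LinearMap.range Λ).subtype)
      (⟨Λ v, LinearMap.mem_range_self Λ v⟩ : LinearMap.range Λ) := rfl
  rw [h2, hg, LinearMap.comp_apply, h1, LinearEquiv.coe_toLinearMap, LinearEquiv.symm_apply_apply]
  simp [fbar]

lemma exists_sep {V : Type*} [AddCommGroup V] [Module ℝ V] (U : Submodule ℝ V) (x : V)
    (hx : x ∉ U) : ∃ f : V →ₗ[ℝ] ℝ, (∀ u ∈ U, f u = 0) ∧ f x ≠ 0 := by
  have hq : U.mkQ x ≠ 0 := by
    simpa [Submodule.mkQ_apply, Submodule.Quotient.mk_eq_zero] using hx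
  obtain ⟨φ, hφ⟩ : ∃ φ : Module.Dual ℝ (V ⧸ U), φ (U.mkQ x) ≠ 0 := by
    by_contra h
    push_neg at h
    exact hq ((Module.forall_dual_apply_eq_zero_iff ℝ _).mp h)
  refine ⟨φ.comp U.mkQ, fun u hu => ?_, hφ⟩
  simp [Submodule.mkQ_apply, (Submodule.Quotient.mk_eq_zero _).mpr hu]

end RationalLinearAlgebra

-- ### chunk2 content
namespace CRN

variable (G : CRN s)

lemma connected_symm {M N : Fin s → ℕ} (h : G.connected M N) : G.connected N M :=
  (@Relation.ReflTransGen.symmetric _ _ ⟨fun _ _ hab => Or.symm hab⟩).symm _ _ h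

lemma eventEdge_add {M N : Fin s → ℕ} (c : Fin s → ℕ) (h : G.eventEdge M N) :
    G.eventEdge (M + c) (N + c) := by
  obtain ⟨i, j, c0, he, rfl, rfl⟩ := h
  exact ⟨i, j, c0 + c, he, by rw [add_right_comm], by rw [add_right_comm]⟩

lemma connected_add {M N : Fin s → ℕ} (c : Fin s → ℕ) (h : G.connected M N) :
    G.connected (M + c) (N + c) :=
  Relation.ReflTransGen.lift (r := fun a b => G.eventEdge a b ∨ G.eventEdge b a) (fun X => X + c)
    (fun _ _ hab => hab.imp (G.eventEdge_add c) (G.eventEdge_add c)) _ _ h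

lemma prod_eq_of_eventEdge {a : Fin s → ℝ} (hv : G.vanishesAt a) {M N : Fin s → ℕ}
    (h : G.eventEdge M N) : ∏ t, a t ^ M t = ∏ t, a t ^ N t := by
  obtain ⟨i, j, c, he, rfl, rfl⟩ := h
  have hc := hv i j he
  simp only [Pi.add_apply, pow_add, Finset.prod_mul_distrib]
  rw [hc]

lemma prod_eq_of_connected {a : Fin s → ℝ} (hv : G.vanishesAt a) {M N : Fin s → ℕ}
    (h : G.connected M N) : ∏ t, a t ^ M t = ∏ t, a t ^ N t := by
  induction h with
  | refl => rfl
  | tail _ h2 ih =>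
    rcases h2 with h2 | h2
    · exact ih.trans (G.prod_eq_of_eventEdge hv h2)
    · exact ih.trans (G.prod_eq_of_eventEdge hv h2).symm

/-- The combinatorial predicate: `d` is realized as difference of connected monomials. -/
def Phi (d : Fin s → ℚ) : Prop :=
  ∃ M P : Fin s → ℕ, (∀ t, (M t : ℚ) - P t = d t) ∧ G.connected M P

lemma phi_zero : G.Phi 0 := ⟨0, 0, by simp, Relation.ReflTransGen.refl⟩

lemma phi_gen {i j : Fin G.n} (h : G.edge i j) :
    G.Phi (fun t => (G.ψ i t : ℚ) - G.ψ j t) :=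
  ⟨G.ψ i, G.ψ j, fun _ => rfl,
    Relation.ReflTransGen.single (Or.inl ⟨i, j, 0, h, (zero_add _).symm, (zero_add _).symm⟩)⟩

lemma phi_add {d1 d2 : Fin s → ℚ} (h1 : G.Phi d1) (h2 : G.Phi d2) : G.Phi (d1 + d2) := by
  obtain ⟨M1, P1, hd1, hc1⟩ := h1
  obtain ⟨M2, P2, hd2, hc2⟩ := h2
  refine ⟨M1 + M2, P1 + P2, fun t => ?_, ?_⟩
  · have := hd1 t; have := hd2 t
    simp only [Pi.add_apply]
    push_cast
    linarith
  · have c1 : G.connected (M1 + M2) (P1 + M2) := G.connected_add M2 hc1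
    have c2 : G.connected (M2 + P1) (P2 + P1) := G.connected_add P1 hc2
    rw [add_comm M2 P1, add_comm P2 P1] at c2
    exact c1.trans c2

lemma phi_neg {d : Fin s → ℚ} (h : G.Phi d) : G.Phi (-d) := by
  obtain ⟨M, P, hd, hc⟩ := h
  exact ⟨P, M, fun t => by have := hd t; simp only [Pi.neg_apply]; linarith,
    G.connected_symm hc⟩

lemma phi_zsmul (z : ℤ) {d : Fin s → ℚ} (h : G.Phi d) : G.Phi (z • d) := by
  induction z using Int.induction_on with
  | zero => simpa using G.phi_zero
  | succ n ih =>
    rw [add_smul, one_smul]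
    exact G.phi_add ih h
  | pred n ih =>
    rw [sub_smul, one_smul, sub_eq_add_neg]
    exact G.phi_add ih (G.phi_neg h)

lemma phi_sum {k : ℕ} (z : Fin k → ℤ) (v : Fin k → (Fin s → ℚ))
    (hv : ∀ i, ∃ i' j', G.edge i' j' ∧ v i = fun t => (G.ψ i' t : ℚ) - G.ψ j' t) :
    G.Phi (∑ i, z i • v i) := by
  induction k with
  | zero => simpa using G.phi_zero
  | succ k ih =>
    rw [Fin.sum_univ_succ]
    refine G.phi_add ?_ (ih _ _ fun i => hv i.succ)
    obtain ⟨i', j', he, hvi⟩ := hv 0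
    rw [hvi]
    exact G.phi_zsmul _ (G.phi_gen he)

/-- The set of rational difference vectors of `G`. -/
def Dset (G : CRN s) : Set (Fin s → ℚ) :=
  {v | ∃ i j, G.edge i j ∧ v = fun t => (G.ψ i t : ℚ) - G.ψ j t}

lemma phi_scaled {q : Fin s → ℚ} (hq : q ∈ Submodule.span ℚ G.Dset) :
    ∃ N : ℕ, 0 < N ∧ G.Phi ((N : ℚ) • q) := by
  rw [Submodule.mem_span_set'] at hq
  obtain ⟨k, c, g, rfl⟩ := hq
  refine ⟨∏ i, (c i).den, Finset.prod_pos fun i _ => (c i).pos, ?_⟩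
  have hint : ∀ i, ∃ z : ℤ, (z : ℚ) = c i * (∏ i, ((c i).den : ℚ)) := by
    intro i
    obtain ⟨M', hM'⟩ : (c i).den ∣ ∏ j, (c j).den :=
      Finset.dvd_prod_of_mem _ (Finset.mem_univ i)
    refine ⟨(c i).num * M', ?_⟩
    have hkey : c i * ((c i).den : ℚ) = (c i).num := by
      have h := Rat.num_div_den (c i)
      calc c i * ((c i).den : ℚ) = (((c i).num : ℚ) / (c i).den) * (c i).den := by rw [h]
        _ = (c i).num := div_mul_cancel₀ _ (by exact_mod_cast (c i).den_nz)
    have hprod : (∏ j, ((c j).den : ℚ)) = (((c i).den : ℚ)) * (M' : ℚ) := by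
      rw [← Nat.cast_prod, hM']
      push_cast
      ring
    rw [hprod, ← mul_assoc, hkey]
    push_cast
    ring
  choose z hz using hint
  have hEq : ((∏ i, (c i).den : ℕ) : ℚ) • (∑ i, c i • (g i : Fin s → ℚ))
      = ∑ i, z i • (g i : Fin s → ℚ) := by
    rw [Finset.smul_sum]
    refine Finset.sum_congr rfl fun i _ => ?_
    rw [smul_smul, ← Int.cast_smul_eq_zsmul ℚ, hz i]
    congr 1
    push_cast
    ring
  rw [hEq]
  exact G.phi_sum z _ fun i => (g i).2

/-- Reduced realization: difference of gcd-coprime connected monomials. -/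
lemma phi_reduced (hcat : ¬ G.catalytic) {d : Fin s → ℚ} (h : G.Phi d) :
    ∃ M P : Fin s → ℕ, (∀ t, (M t : ℚ) - P t = d t) ∧ (∀ t, M t = 0 ∨ P t = 0) ∧
      G.connected M P := by
  obtain ⟨M, P, hd, hc⟩ := h
  simp only [CRN.catalytic, not_exists, not_and, not_not] at hcat
  refine ⟨M - mgcd M P, P - mgcd M P, fun t => ?_, fun t => ?_, hcat M P hc⟩
  · have h1 : min (M t) (P t) ≤ M t := min_le_left _ _
    have h2 : min (M t) (P t) ≤ P t := min_le_right _ _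
    have hMt : ((M - mgcd M P) t : ℚ) = (M t : ℚ) - min (M t) (P t) := by
      simp only [Pi.sub_apply, mgcd]
      rw [Nat.cast_sub h1]
    have hPt : ((P - mgcd M P) t : ℚ) = (P t : ℚ) - min (M t) (P t) := by
      simp only [Pi.sub_apply, mgcd]
      rw [Nat.cast_sub h2]
    rw [hMt, hPt, ← hd t]
    ring
  · simp only [Pi.sub_apply, mgcd]
    omega

lemma no_bad_q {a : Fin s → ℝ} (hcat : ¬ G.catalytic) (ha0 : ∀ t, 0 ≤ a t)
    (hv : G.vanishesAt a) {q : Fin s → ℚ} (hq : q ∈ Submodule.span ℚ G.Dset)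
    (hge : ∀ t, a t = 0 → 0 ≤ q t) (hex : ∃ t, a t = 0 ∧ 0 < q t) : False := by
  obtain ⟨N, hN, hphi⟩ := G.phi_scaled hq
  obtain ⟨M, P, hd, hmin, hconn⟩ := G.phi_reduced hcat hphi
  have hNq : ∀ t, (M t : ℚ) - P t = (N : ℚ) * q t := by
    intro t; rw [hd t]; simp
  have hprod := G.prod_eq_of_connected hv hconn
  obtain ⟨t0, ht0, hq0⟩ := hex
  have hM0 : M t0 ≠ 0 := by
    have h1 : (0 : ℚ) < (N : ℚ) * q t0 := by positivity
    have h2 : (P t0 : ℚ) < M t0 := by linarith [hNq t0]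
    have h3 : P t0 < M t0 := by exact_mod_cast h2
    omega
  have hLHS : ∏ t, a t ^ M t = 0 :=
    Finset.prod_eq_zero (Finset.mem_univ t0) (by rw [ht0]; exact zero_pow hM0)
  have hRHS : 0 < ∏ t, a t ^ P t := by
    refine Finset.prod_pos fun t _ => ?_
    rcases Nat.eq_zero_or_pos (P t) with h | h
    · rw [h, pow_zero]; norm_num
    · have haz : a t ≠ 0 := by
        intro haz
        have h1 : 0 ≤ q t := hge t haz
        have h2 : M t = 0 := by
          rcases hmin t with h' | h'
          · exact h'
          · omega
        have h3 : (0 : ℚ) - P t = (N : ℚ) * q t := by rw [← hNq t, h2]; norm_num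
        have h4 : (0 : ℚ) ≤ (N : ℚ) * q t := by positivity
        have h5 : (0 : ℚ) < (P t : ℚ) := by exact_mod_cast h
        linarith
      exact pow_pos (lt_of_le_of_ne (ha0 t) (Ne.symm haz)) _
  rw [hprod] at hLHS
  rw [hLHS] at hRHS
  exact lt_irrefl _ hRHS

lemma pairing_zero {a : Fin s → ℝ} (hcat : ¬ G.catalytic) (ha0 : ∀ t, 0 ≤ a t)
    (hv : G.vanishesAt a) {q : Fin s → ℚ} (hq : q ∈ Submodule.span ℚ G.Dset)
    (hz : ∀ t, a t = 0 → q t = 0) : ∑ t, (q t : ℝ) * Real.log (a t) = 0 := by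
  obtain ⟨N, hN, hphi⟩ := G.phi_scaled hq
  obtain ⟨M, P, hd, hmin, hconn⟩ := G.phi_reduced hcat hphi
  have hNq : ∀ t, (M t : ℚ) - P t = (N : ℚ) * q t := by
    intro t; rw [hd t]; simp
  have hprod := G.prod_eq_of_connected hv hconn
  have hnzM : ∀ t ∈ Finset.univ, a t ^ M t ≠ 0 := by
    intro t _
    by_cases haz : a t = 0
    · have : M t = 0 := by
        have h1 : (M t : ℚ) - P t = 0 := by rw [hNq t, hz t haz]; ring
        have h2 : (M t : ℚ) = P t := by linarith
        have h3 : M t = P t := by exact_mod_cast h2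
        rcases hmin t with h' | h' <;> omega
      rw [this, pow_zero]; norm_num
    · exact pow_ne_zero _ haz
  have hnzP : ∀ t ∈ Finset.univ, a t ^ P t ≠ 0 := by
    intro t _
    by_cases haz : a t = 0
    · have : P t = 0 := by
        have h1 : (M t : ℚ) - P t = 0 := by rw [hNq t, hz t haz]; ring
        have h2 : (M t : ℚ) = P t := by linarith
        have h3 : M t = P t := by exact_mod_cast h2
        rcases hmin t with h' | h' <;> omega
      rw [this, pow_zero]; norm_num
    · exact pow_ne_zero _ haz
  have hlog : ∑ t, (M t : ℝ) * Real.log (a t) = ∑ t, (P t : ℝ) * Real.log (a t) := by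
    have h1 : Real.log (∏ t, a t ^ M t) = ∑ t, (M t : ℝ) * Real.log (a t) := by
      rw [Real.log_prod hnzM]
      exact Finset.sum_congr rfl fun t _ => Real.log_pow _ _
    have h2 : Real.log (∏ t, a t ^ P t) = ∑ t, (P t : ℝ) * Real.log (a t) := by
      rw [Real.log_prod hnzP]
      exact Finset.sum_congr rfl fun t _ => Real.log_pow _ _
    rw [← h1, ← h2, hprod]
  have hsub : ∑ t, ((M t : ℝ) - (P t : ℝ)) * Real.log (a t) = 0 := by
    have := Finset.sum_sub_distrib (f := fun t => (M t : ℝ) * Real.log (a t))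
      (g := fun t => (P t : ℝ) * Real.log (a t)) (s := Finset.univ)
    simp only [sub_mul]
    rw [Finset.sum_sub_distrib, hlog, sub_self]
  have hcast : ∀ t, (M t : ℝ) - (P t : ℝ) = (N : ℝ) * (q t : ℝ) := by
    intro t
    have h1 := hNq t
    have h2 : ((M t : ℚ) : ℝ) - ((P t : ℚ) : ℝ) = (((N : ℚ)) : ℝ) * ((q t : ℚ) : ℝ) := by
      exact_mod_cast congrArg (fun x : ℚ => (x : ℝ)) h1
    push_cast at h2 ⊢
    linarith
  have hfinal : (N : ℝ) * ∑ t, (q t : ℝ) * Real.log (a t) = 0 := by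
    rw [Finset.mul_sum]
    rw [← hsub]
    refine Finset.sum_congr rfl fun t _ => ?_
    rw [hcast t]; ring
  have hNne : (N : ℝ) ≠ 0 := by positivity
  exact (mul_eq_zero.mp hfinal).resolve_left hNne

end CRN

namespace CRN

variable (G : CRN s)

open Classical in
/-- The linear constraint map encoding the event-system equations and the
off-zero-set coordinate constraints. -/
noncomputable def lam (a : Fin s → ℝ) :
    (Fin s → ℝ) →ₗ[ℝ] (((Fin G.n × Fin G.n) ⊕ Fin s) → ℝ) where
  toFun y := fun k =>
    match k with
    | Sum.inl p => if G.edge p.1 p.2 then ∑ t, ((G.ψ p.1 t : ℝ) - G.ψ p.2 t) * y t else 0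
    | Sum.inr t => if a t = 0 then 0 else y t
  map_add' y z := by
    funext k
    rcases k with p | t
    · show (if G.edge p.1 p.2 then ∑ t, ((G.ψ p.1 t : ℝ) - G.ψ p.2 t) * (y t + z t) else 0) = _
      by_cases h : G.edge p.1 p.2
      · simp only [h, if_true, Pi.add_apply, mul_add, Finset.sum_add_distrib]
      · simp only [h, if_false]
        show (0:ℝ) = (if G.edge p.1 p.2 then _ else 0) + (if G.edge p.1 p.2 then _ else 0)
        simp [h]
    · show (if a t = 0 then 0 else (y t + z t)) = _
      by_cases h : a t = 0
      · show _ = (if a t = 0 then (0:ℝ) else _) + (if a t = 0 then (0:ℝ) else _)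
        simp [h]
      · show _ = (if a t = 0 then (0:ℝ) else y t) + (if a t = 0 then (0:ℝ) else z t)
        simp [h]
  map_smul' c y := by
    funext k
    rcases k with p | t
    · show (if G.edge p.1 p.2 then ∑ t, ((G.ψ p.1 t : ℝ) - G.ψ p.2 t) * (c * y t) else 0)
        = c * (if G.edge p.1 p.2 then ∑ t, ((G.ψ p.1 t : ℝ) - G.ψ p.2 t) * y t else 0)
      by_cases h : G.edge p.1 p.2
      · simp only [h, if_true, Finset.mul_sum]
        exact Finset.sum_congr rfl fun t _ => by ring
      · simp [h]
    · show (if a t = 0 then 0 else c * y t) = c * (if a t = 0 then 0 else y t)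
      by_cases h : a t = 0 <;> simp [h]

open Classical in
lemma lam_inl (a : Fin s → ℝ) (y : Fin s → ℝ) (p : Fin G.n × Fin G.n) :
    G.lam a y (Sum.inl p)
      = if G.edge p.1 p.2 then ∑ t, ((G.ψ p.1 t : ℝ) - G.ψ p.2 t) * y t else 0 := rfl

open Classical in
lemma lam_inr (a : Fin s → ℝ) (y : Fin s → ℝ) (t : Fin s) :
    G.lam a y (Sum.inr t) = if a t = 0 then 0 else y t := rfl

open Classical in
lemma lam_single_inl (a : Fin s → ℝ) (t' : Fin s) (p : Fin G.n × Fin G.n) :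
    G.lam a (Pi.single t' 1) (Sum.inl p)
      = if G.edge p.1 p.2 then ((G.ψ p.1 t' : ℝ) - G.ψ p.2 t') else 0 := by
  rw [lam_inl]
  by_cases h : G.edge p.1 p.2
  · simp only [h, if_true]
    exact sum_mul_single (fun t => (G.ψ p.1 t : ℝ) - G.ψ p.2 t) t'
  · simp [h]

open Classical in
lemma lam_single_pair (a : Fin s → ℝ)
    (g : ((((Fin G.n × Fin G.n) ⊕ Fin s)) → ℝ) →ₗ[ℝ] ℝ) (t' : Fin s) :
    g (G.lam a (Pi.single t' 1))
      = (∑ p, (if G.edge p.1 p.2 then ((G.ψ p.1 t' : ℝ) - G.ψ p.2 t') else 0)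
          * g (Pi.single (Sum.inl p) 1))
        + (if a t' = 0 then 0 else g (Pi.single (Sum.inr t') 1)) := by
  rw [dual_pi g, Fintype.sum_sum_type]
  congr 1
  · exact Finset.sum_congr rfl fun p _ => by rw [lam_single_inl]
  · have hterm : ∀ t, G.lam a (Pi.single t' 1) (Sum.inr t) * g (Pi.single (Sum.inr t) 1)
        = if t = t' then (if a t' = 0 then (0:ℝ) else g (Pi.single (Sum.inr t') 1)) else 0 := by
      intro t
      rw [lam_inr]
      rcases eq_or_ne t t' with rfl | hne
      · by_cases h : a t = 0 <;> simp [h, Pi.single_apply]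
      · have hz : (Pi.single t' 1 : Fin s → ℝ) t = 0 := by simp [Pi.single_apply, hne]
        rw [hz]
        simp [hne, ite_self]
    rw [Finset.sum_congr rfl fun t _ => hterm t, Finset.sum_ite_eq' Finset.univ t']
    simp

open Classical in
lemma xi_mem_span (c : (Fin G.n × Fin G.n) → ℝ) :
    (fun t => ∑ p, (if G.edge p.1 p.2 then ((G.ψ p.1 t : ℝ) - G.ψ p.2 t) else 0) * c p)
      ∈ Submodule.span ℝ (rc ''
        ((Submodule.span ℚ G.Dset : Submodule ℚ (Fin s → ℚ)) : Set (Fin s → ℚ))) := by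
  have hEq : (fun t => ∑ p, (if G.edge p.1 p.2 then ((G.ψ p.1 t : ℝ) - G.ψ p.2 t) else 0) * c p)
      = ∑ p : Fin G.n × Fin G.n, c p •
        rc (if G.edge p.1 p.2 then (fun t => (G.ψ p.1 t : ℚ) - G.ψ p.2 t) else 0) := by
    funext t
    rw [Finset.sum_apply]
    refine Finset.sum_congr rfl fun p _ => ?_
    by_cases h : G.edge p.1 p.2 <;> simp [h, rc, mul_comm]
  rw [hEq]
  refine Submodule.sum_mem _ fun p _ => Submodule.smul_mem _ _ (Submodule.subset_span ⟨_, ?_, rfl⟩)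
  by_cases h : G.edge p.1 p.2
  · simp only [if_pos h]
    exact Submodule.subset_span ⟨p.1, p.2, h, rfl⟩
  · simp only [if_neg h]
    exact Submodule.zero_mem _

open Classical in
lemma exists_y (hcat : ¬ G.catalytic) {a : Fin s → ℝ} (ha0 : ∀ t, 0 ≤ a t)
    (hv : G.vanishesAt a) :
    ∃ y : Fin s → ℝ, (∀ i j, G.edge i j → ∑ t, ((G.ψ i t : ℝ) - G.ψ j t) * y t = 0) ∧
      ∀ t, a t ≠ 0 → y t = Real.log (a t) := by
  set b : (((Fin G.n × Fin G.n) ⊕ Fin s)) → ℝ :=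
    Sum.elim (fun _ => 0) (fun t => if a t = 0 then 0 else Real.log (a t)) with hb
  by_cases hbr : b ∈ LinearMap.range (G.lam a)
  · obtain ⟨y, hy⟩ := hbr
    refine ⟨y, fun i j hij => ?_, fun t ht => ?_⟩
    · have h1 := congrFun hy (Sum.inl (i, j))
      rw [lam_inl, if_pos hij] at h1
      simpa [hb] using h1
    · have h1 := congrFun hy (Sum.inr t)
      rw [lam_inr, if_neg ht] at h1
      simpa [hb, ht] using h1
  · exfalso
    obtain ⟨f, hfU, hfb⟩ := exists_sep (LinearMap.range (G.lam a)) b hbr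
    set μ : (((Fin G.n × Fin G.n) ⊕ Fin s)) → ℝ := fun k => f (Pi.single k 1) with hμ
    set ξ : Fin s → ℝ :=
      fun t => ∑ p, (if G.edge p.1 p.2 then ((G.ψ p.1 t : ℝ) - G.ψ p.2 t) else 0)
        * μ (Sum.inl p) with hξ
    have hid : ∀ t', ξ t' + (if a t' = 0 then 0 else μ (Sum.inr t')) = 0 := by
      intro t'
      have h0 : f (G.lam a (Pi.single t' 1)) = 0 := hfU _ (LinearMap.mem_range_self _ _)
      rw [lam_single_pair] at h0
      exact h0
    have hξZ : ∀ t, a t = 0 → ξ t = 0 := by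
      intro t h
      have h1 := hid t
      rw [if_pos h] at h1
      linarith
    have hξspan : ξ ∈ Submodule.span ℝ (rc ''
        ((Submodule.span ℚ G.Dset : Submodule ℚ (Fin s → ℚ)) : Set (Fin s → ℚ))) :=
      G.xi_mem_span (fun p => μ (Sum.inl p))
    set zl : List (Fin s) := (Finset.univ.filter (fun t => a t = 0)).toList with hzl
    have hl : ∀ bq ∈ zl.map (fun t => (Pi.single t (1:ℚ) : Fin s → ℚ)),
        ∑ t, ((bq t : ℚ) : ℝ) * ξ t = 0 := by
      intro bq hbq
      rw [List.mem_map] at hbq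
      obtain ⟨t, ht, rfl⟩ := hbq
      have htz : a t = 0 := by
        rw [hzl, Finset.mem_toList, Finset.mem_filter] at ht
        exact ht.2
      have hcast : ∀ t'', (((Pi.single t (1:ℚ) : Fin s → ℚ) t'' : ℚ) : ℝ)
          = (Pi.single t (1:ℝ) : Fin s → ℝ) t'' := by
        intro t''
        simp [Pi.single_apply, apply_ite (fun q : ℚ => (q : ℝ))]
      calc ∑ t'', (((Pi.single t (1:ℚ) : Fin s → ℚ) t'' : ℚ) : ℝ) * ξ t''
          = ∑ t'', (Pi.single t (1:ℝ) : Fin s → ℝ) t'' * ξ t'' :=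
            Finset.sum_congr rfl fun t'' _ => by rw [hcast t'']
        _ = ξ t := single_dot ξ t
        _ = 0 := hξZ t htz
    obtain ⟨Q, hQle, hQker, hQx⟩ :=
      lemS_list (zl.map (fun t => (Pi.single t (1:ℚ) : Fin s → ℚ)))
        (Submodule.span ℚ G.Dset) ξ hξspan hl
    have hker : ∀ u ∈ Q, ∑ t, (u t : ℝ) * Real.log (a t) = 0 := by
      intro u hu
      refine G.pairing_zero hcat ha0 hv (hQle hu) ?_
      intro t ht
      have hmem : (Pi.single t (1:ℚ) : Fin s → ℚ)
          ∈ zl.map (fun t => (Pi.single t (1:ℚ) : Fin s → ℚ)) := by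
        refine List.mem_map_of_mem ?_
        rw [hzl, Finset.mem_toList, Finset.mem_filter]
        exact ⟨Finset.mem_univ t, ht⟩
      have h2 := hQker u hu _ hmem
      rwa [dotL_apply, single_dot] at h2
    have hξ0 : ∑ t, ξ t * Real.log (a t) = 0 := by
      have hle : Submodule.span ℝ (rc '' (Q : Set (Fin s → ℚ)))
          ≤ LinearMap.ker (dotL ℝ (fun t => Real.log (a t))) := by
        rw [Submodule.span_le]
        rintro _ ⟨u, hu, rfl⟩
        simp only [SetLike.mem_coe, LinearMap.mem_ker, dotL_apply]
        have h3 := hker u hu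
        rw [← h3]
        exact Finset.sum_congr rfl fun t _ => mul_comm _ _
      have h4 := hle hQx
      simp only [LinearMap.mem_ker, dotL_apply] at h4
      rw [← h4]
      exact Finset.sum_congr rfl fun t _ => mul_comm _ _
    apply hfb
    rw [dual_pi f b, Fintype.sum_sum_type]
    have h1 : ∑ p : Fin G.n × Fin G.n, b (Sum.inl p) * f (Pi.single (Sum.inl p) 1) = 0 := by
      simp [hb]
    have h2 : ∑ t, b (Sum.inr t) * f (Pi.single (Sum.inr t) 1)
        = ∑ t, -(ξ t * Real.log (a t)) := by
      refine Finset.sum_congr rfl fun t _ => ?_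
      by_cases h : a t = 0
      · simp [hb, h, hξZ t h]
      · have h5 := hid t
        rw [if_neg h] at h5
        have hμt : μ (Sum.inr t) = -ξ t := by linarith
        have hμt' : f (Pi.single (Sum.inr t) 1) = -ξ t := hμt
        simp only [hb, Sum.elim_inr, if_neg h, hμt']
        ring
    rw [h1, h2, zero_add, Finset.sum_neg_distrib, hξ0, neg_zero]

open Classical in
lemma exists_w (hcat : ¬ G.catalytic) {a : Fin s → ℝ} (ha0 : ∀ t, 0 ≤ a t)
    (hv : G.vanishesAt a) :
    ∃ w : Fin s → ℝ, (∀ i j, G.edge i j → ∑ t, ((G.ψ i t : ℝ) - G.ψ j t) * w t = 0) ∧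
      (∀ t, a t ≠ 0 → w t = 0) ∧ (∀ t, a t = 0 → w t < 0) := by
  by_cases hint : ∃ w, w ∈ LinearMap.ker (G.lam a) ∧ ∀ t, a t = 0 → w t < 0
  · obtain ⟨w, hwk, hwneg⟩ := hint
    have h1 : ∀ k, G.lam a w k = 0 := fun k => congrFun (LinearMap.mem_ker.mp hwk) k
    refine ⟨w, fun i j hij => ?_, fun t ht => ?_, hwneg⟩
    · have h2 := h1 (Sum.inl (i, j))
      rwa [lam_inl, if_pos hij] at h2
    · have h2 := h1 (Sum.inr t)
      rwa [lam_inr, if_neg ht] at h2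
  · exfalso
    set Ω : Set (Fin s → ℝ) := {w | ∀ t, a t = 0 → w t < 0} with hΩ
    have hΩo : IsOpen Ω := by
      have hEq : Ω = ⋂ t ∈ Finset.univ.filter (fun t => a t = 0), {w : Fin s → ℝ | w t < 0} := by
        ext w
        simp [hΩ, Finset.mem_filter]
      rw [hEq]
      exact isOpen_biInter_finset fun t _ => isOpen_lt (continuous_apply t) continuous_const
    have hΩc : Convex ℝ Ω := by
      intro x hx y hy α β hα hβ hαβ
      intro t ht
      have h1 := hx t ht
      have h2 := hy t ht
      simp only [Pi.add_apply, Pi.smul_apply, smul_eq_mul]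
      rcases hα.eq_or_lt with rfl | hα'
      · have hβ1 : β = 1 := by linarith
        rw [hβ1]
        simpa using h2
      · have hax : α * x t < 0 := mul_neg_of_pos_of_neg hα' h1
        have hby : β * y t ≤ 0 := mul_nonpos_of_nonneg_of_nonpos hβ (le_of_lt h2)
        linarith
    have hdisj : Disjoint Ω (LinearMap.ker (G.lam a) : Set (Fin s → ℝ)) := by
      rw [Set.disjoint_left]
      intro w hwΩ hwU
      exact hint ⟨w, hwU, hwΩ⟩
    obtain ⟨f, u, hf1, hf2⟩ :=
      geometric_hahn_banach_open hΩc hΩo (LinearMap.ker (G.lam a)).convex hdisj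
    have hU0 : ∀ y ∈ LinearMap.ker (G.lam a), f y = 0 := by
      intro y hy
      by_contra hne
      have h1 := hf2 _ (Submodule.smul_mem _ ((u - 1)/(f y)) hy)
      rw [map_smul, smul_eq_mul, div_mul_cancel₀ _ hne] at h1
      linarith
    have hu0 : u ≤ 0 := by
      have := hf2 0 (Submodule.zero_mem _)
      simpa using this
    set w0 : Fin s → ℝ := fun t => if a t = 0 then -1 else 0 with hw0
    have hw0Ω : w0 ∈ Ω := by
      intro t ht
      simp [hw0, ht]
    have hfw0 : f w0 < u := hf1 w0 hw0Ω
    set φ : Fin s → ℝ := fun t => f (Pi.single t 1) with hφ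
    have hoff : ∀ t, a t ≠ 0 → φ t = 0 := by
      intro t ht
      rcases eq_or_ne (φ t) 0 with h | hne
      · exact h
      exfalso
      have hmem : ∀ R : ℝ, w0 + R • (Pi.single t 1 : Fin s → ℝ) ∈ Ω := by
        intro R t' ht'
        have hne' : t' ≠ t := fun h => ht (h ▸ ht')
        simp [hw0, Pi.single_apply, ht', hne']
      have hval : ∀ R : ℝ, f w0 + R * φ t < u := by
        intro R
        have h3 := hf1 _ (hmem R)
        rwa [map_add, map_smul, smul_eq_mul] at h3
      have h1 := hval ((u - f w0) / φ t)
      rw [div_mul_cancel₀ _ hne] at h1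
      linarith
    have hZ : ∀ t, a t = 0 → 0 ≤ φ t := by
      intro t ht
      by_contra hneg
      push_neg at hneg
      have hmem : ∀ R : ℝ, 0 < R → w0 + R • (-(Pi.single t 1 : Fin s → ℝ)) ∈ Ω := by
        intro R hR t' ht'
        rcases eq_or_ne t' t with rfl | hne'
        · simp only [Pi.add_apply, Pi.smul_apply, Pi.neg_apply, smul_eq_mul]
          have hs : (Pi.single t' (1:ℝ) : Fin s → ℝ) t' = 1 := by simp
          rw [hs]
          simp only [hw0, ht', if_pos]
          linarith
        · simp only [Pi.add_apply, Pi.smul_apply, Pi.neg_apply, smul_eq_mul]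
          have hs : (Pi.single t (1:ℝ) : Fin s → ℝ) t' = 0 := by simp [Pi.single_apply, hne']
          rw [hs]
          simp [hw0, ht']
      have hval : ∀ R : ℝ, 0 < R → f w0 - R * φ t < u := by
        intro R hR
        have h3 := hf1 _ (hmem R hR)
        rw [map_add, map_smul, smul_eq_mul, map_neg] at h3
        linarith
      have hφne : φ t ≠ 0 := ne_of_lt hneg
      have hRpos : (0:ℝ) < (u - f w0 + 1) / (-(φ t)) :=
        div_pos (by linarith) (by linarith)
      have h1 := hval _ hRpos
      have h4 : (u - f w0 + 1) / (-(φ t)) * φ t = -(u - f w0 + 1) := by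
        rw [div_mul_eq_mul_div, mul_div_assoc, div_neg, div_self hφne, mul_neg, mul_one]
      rw [h4] at h1
      linarith
    have hne0 : ∃ t, a t = 0 ∧ 0 < φ t := by
      by_contra h
      push_neg at h
      have hφ0 : ∀ t, φ t = 0 := by
        intro t
        by_cases ht : a t = 0
        · exact le_antisymm (h t ht) (hZ t ht)
        · exact hoff t ht
      have hf0 : f w0 = 0 := by
        have := dual_pi (f : (Fin s → ℝ) →ₗ[ℝ] ℝ) w0
        simp only [ContinuousLinearMap.coe_coe] at this
        rw [this]
        refine Finset.sum_eq_zero fun t _ => ?_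
        have : f (Pi.single t 1) = φ t := rfl
        rw [this, hφ0 t, mul_zero]
      rw [hf0] at hfw0
      linarith
    obtain ⟨g, hg⟩ := exists_factor (G.lam a) (f : (Fin s → ℝ) →ₗ[ℝ] ℝ)
      (fun v hv => hU0 v (LinearMap.mem_ker.mpr hv))
    set ξ : Fin s → ℝ :=
      fun t => ∑ p, (if G.edge p.1 p.2 then ((G.ψ p.1 t : ℝ) - G.ψ p.2 t) else 0)
        * g (Pi.single (Sum.inl p) 1) with hξ
    have hid : ∀ t', φ t' = ξ t' + (if a t' = 0 then 0 else g (Pi.single (Sum.inr t') 1)) := by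
      intro t'
      have h3 := hg (Pi.single t' 1)
      rw [lam_single_pair] at h3
      have h4 : (f : (Fin s → ℝ) →ₗ[ℝ] ℝ) (Pi.single t' 1) = φ t' := rfl
      rw [h4] at h3
      exact h3.symm
    have hidZ : ∀ t, a t = 0 → ξ t = φ t := by
      intro t ht
      have h3 := hid t
      rw [if_pos ht] at h3
      linarith
    have hξspan : ξ ∈ Submodule.span ℝ (rc ''
        ((Submodule.span ℚ G.Dset : Submodule ℚ (Fin s → ℚ)) : Set (Fin s → ℚ))) :=
      G.xi_mem_span (fun p => g (Pi.single (Sum.inl p) 1))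
    set zl : List (Fin s) := (Finset.univ.filter (fun t => a t = 0 ∧ φ t = 0)).toList with hzl
    have hl : ∀ bq ∈ zl.map (fun t => (Pi.single t (1:ℚ) : Fin s → ℚ)),
        ∑ t, ((bq t : ℚ) : ℝ) * ξ t = 0 := by
      intro bq hbq
      rw [List.mem_map] at hbq
      obtain ⟨t, ht, rfl⟩ := hbq
      rw [hzl, Finset.mem_toList, Finset.mem_filter] at ht
      have hcast : ∀ t'', (((Pi.single t (1:ℚ) : Fin s → ℚ) t'' : ℚ) : ℝ)
          = (Pi.single t (1:ℝ) : Fin s → ℝ) t'' := by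
        intro t''
        simp [Pi.single_apply, apply_ite (fun q : ℚ => (q : ℝ))]
      calc ∑ t'', (((Pi.single t (1:ℚ) : Fin s → ℚ) t'' : ℚ) : ℝ) * ξ t''
          = ∑ t'', (Pi.single t (1:ℝ) : Fin s → ℝ) t'' * ξ t'' :=
            Finset.sum_congr rfl fun t'' _ => by rw [hcast t'']
        _ = ξ t := single_dot ξ t
        _ = 0 := by rw [hidZ t ht.2.1, ht.2.2]
    obtain ⟨Q, hQle, hQker, hQx⟩ :=
      lemS_list (zl.map (fun t => (Pi.single t (1:ℚ) : Fin s → ℚ)))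
        (Submodule.span ℚ G.Dset) ξ hξspan hl
    set T : Finset (Fin s) := Finset.univ.filter (fun t => a t = 0 ∧ 0 < φ t) with hT
    have hTpos : ∀ t ∈ T, 0 < ξ t := by
      intro t ht
      rw [hT, Finset.mem_filter] at ht
      rw [hidZ t ht.2.1]
      exact ht.2.2
    obtain ⟨uq, huqQ, huqpos⟩ := rat_approx Q ξ hQx T hTpos
    obtain ⟨t1, ht1a, ht1φ⟩ := hne0
    have ht1T : t1 ∈ T := by
      rw [hT, Finset.mem_filter]
      exact ⟨Finset.mem_univ _, ht1a, ht1φ⟩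
    refine G.no_bad_q hcat ha0 hv (hQle huqQ) ?_ ⟨t1, ht1a, huqpos t1 ht1T⟩
    intro t ht
    rcases (hZ t ht).eq_or_lt with h | h
    · have hmem : (Pi.single t (1:ℚ) : Fin s → ℚ)
          ∈ zl.map (fun t => (Pi.single t (1:ℚ) : Fin s → ℚ)) := by
        refine List.mem_map_of_mem ?_
        rw [hzl, Finset.mem_toList, Finset.mem_filter]
        exact ⟨Finset.mem_univ t, ht, h.symm⟩
      have h2 := hQker uq huqQ _ hmem
      rw [dotL_apply, single_dot] at h2
      rw [h2]
    · have htT : t ∈ T := by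
        rw [hT, Finset.mem_filter]
        exact ⟨Finset.mem_univ _, ht, h⟩
      exact le_of_lt (huqpos t htT)

end CRN

end AuxDense

/-- For a weakly-reversible, non-catalytic CRN, the positive real zeros of `E_G`
are dense in the nonnegative real zeros. -/
theorem positive_zeros_dense {s : ℕ} (G : CRN s) (hwr : G.weaklyReversible)
    (hcat : ¬ G.catalytic) :
    {a : Fin s → ℝ | (∀ i, 0 ≤ a i) ∧ G.vanishesAt a} ⊆
      closure {a : Fin s → ℝ | (∀ i, 0 < a i) ∧ G.vanishesAt a} := by
  intro a ha
  obtain ⟨ha0, hv⟩ := ha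
  obtain ⟨w, hw1, hw2, hw3⟩ := G.exists_w hcat ha0 hv
  obtain ⟨y, hy1, hy2⟩ := G.exists_y hcat ha0 hv
  set x : ℕ → Fin s → ℝ := fun n t => Real.exp (y t + n * w t) with hx
  have hxS : ∀ n, x n ∈ {a : Fin s → ℝ | (∀ i, 0 < a i) ∧ G.vanishesAt a} := by
    intro n
    refine ⟨fun t => Real.exp_pos _, fun i j hij => ?_⟩
    have hprod : ∀ e : Fin s → ℕ,
        ∏ t, x n t ^ e t = Real.exp (∑ t, (e t : ℝ) * (y t + (n : ℝ) * w t)) := by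
      intro e
      rw [Real.exp_sum]
      refine Finset.prod_congr rfl fun t _ => ?_
      rw [← Real.exp_nat_mul]
    rw [hprod, hprod]
    congr 1
    have hz : ∑ t, ((G.ψ i t : ℝ) - G.ψ j t) * (y t + (n:ℝ) * w t) = 0 := by
      have h1 := hy1 i j hij
      have h2 := hw1 i j hij
      have h3 : ∑ t, ((G.ψ i t : ℝ) - G.ψ j t) * (y t + (n:ℝ) * w t)
          = (∑ t, ((G.ψ i t : ℝ) - G.ψ j t) * y t)
            + (n:ℝ) * ∑ t, ((G.ψ i t : ℝ) - G.ψ j t) * w t := by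
        rw [Finset.mul_sum, ← Finset.sum_add_distrib]
        exact Finset.sum_congr rfl fun t _ => by ring
      rw [h3, h1, h2]
      ring
    have h4 : ∑ t, (((G.ψ i t : ℝ)) * (y t + (n:ℝ) * w t)
        - ((G.ψ j t : ℝ)) * (y t + (n:ℝ) * w t)) = 0 := by
      rw [← hz]
      exact Finset.sum_congr rfl fun t _ => by ring
    rw [Finset.sum_sub_distrib] at h4
    linarith
  have hlim : Filter.Tendsto x Filter.atTop (nhds a) := by
    rw [tendsto_pi_nhds]
    intro t
    by_cases hz : a t = 0
    · rw [hz]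
      have h1 : Filter.Tendsto (fun n : ℕ => y t + (n:ℝ) * w t) Filter.atTop Filter.atBot := by
        apply Filter.tendsto_atBot_add_const_left
        exact Filter.Tendsto.atTop_mul_const_of_neg (hw3 t hz) tendsto_natCast_atTop_atTop
      exact Real.tendsto_exp_atBot.comp h1
    · have hxeq : ∀ n : ℕ, x n t = a t := by
        intro n
        simp only [hx]
        rw [hw2 t hz, hy2 t hz]
        simp [Real.exp_log (lt_of_le_of_ne (ha0 t) (Ne.symm hz))]
      have heq : (fun n : ℕ => x n t) = fun _ => a t := funext hxeq
      rw [heq]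
      exact tendsto_const_nhds
  exact mem_closure_of_tendsto hlim (Filter.Eventually.of_forall hxS)
end

section
/- Every weakly-reversible CRN that has a critical siphon is catalytic. -/
open MvPolynomial Relation

variable {s : ℕ}

def ZFree (Z : Set (Fin s)) (e : Fin s → ℕ) : Prop := ∀ t ∈ Z, e t = 0

lemma siphon_step (G : CRN s) (Z : Set (Fin s)) (hs : G.siphon Z) {i j}
    (h : G.edge i j) (hi : ZFree Z (G.ψ i)) : ZFree Z (G.ψ j) := by
  intro t ht
  by_contra hne
  obtain ⟨l, hl, hne'⟩ := hs.2 i j h ⟨t, ht, hne⟩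
  exact hne' (hi l hl)

lemma siphon_reach (G : CRN s) (Z : Set (Fin s)) (hs : G.siphon Z) {i j}
    (h : Relation.ReflTransGen G.edge i j) (hi : ZFree Z (G.ψ i)) :
    ZFree Z (G.ψ j) := by
  induction h with
  | refl => exact hi
  | tail _ e ih => exact siphon_step G Z hs e ih

lemma sym_step (G : CRN s) (Z : Set (Fin s)) (hwr : G.weaklyReversible)
    (hs : G.siphon Z) {i j} (h : G.edge i j ∨ G.edge j i)
    (hi : ZFree Z (G.ψ i)) : ZFree Z (G.ψ j) :=
  siphon_reach G Z hs (hwr i j (Relation.ReflTransGen.single h)) hi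

lemma event_step (G : CRN s) (Z : Set (Fin s)) (hwr : G.weaklyReversible)
    (hs : G.siphon Z) {M N : Fin s → ℕ}
    (h : G.eventEdge M N ∨ G.eventEdge N M) (hM : ZFree Z M) : ZFree Z N := by
  rcases h with ⟨i, j, c, he, hM', hN'⟩ | ⟨i, j, c, he, hN', hM'⟩
  · subst hM' hN'
    have hc : ∀ t ∈ Z, c t = 0 ∧ G.ψ i t = 0 := fun t ht =>
      Nat.add_eq_zero.mp (hM t ht)
    have hψ : ZFree Z (G.ψ j) :=
      sym_step G Z hwr hs (Or.inl he) (fun t ht => (hc t ht).2)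
    intro t ht
    show c t + G.ψ j t = 0
    rw [(hc t ht).1, hψ t ht]
  · subst hM' hN'
    have hc : ∀ t ∈ Z, c t = 0 ∧ G.ψ j t = 0 := fun t ht =>
      Nat.add_eq_zero.mp (hM t ht)
    have hψ : ZFree Z (G.ψ i) :=
      sym_step G Z hwr hs (Or.inr he) (fun t ht => (hc t ht).2)
    intro t ht
    show c t + G.ψ i t = 0
    rw [(hc t ht).1, hψ t ht]

lemma connected_ZFree (G : CRN s) (Z : Set (Fin s)) (hwr : G.weaklyReversible)
    (hs : G.siphon Z) {M N : Fin s → ℕ} (h : G.connected M N)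
    (hM : ZFree Z M) : ZFree Z N := by
  induction h with
  | refl => exact hM
  | tail _ e ih => exact event_step G Z hwr hs e ih

lemma path_connected (G : CRN s) (L : List (Fin G.n × Fin G.n))
    (hL : ∀ p ∈ L, G.edge p.1 p.2 ∨ G.edge p.2 p.1) :
    ∀ K : Fin s → ℕ,
      G.connected (K + (L.map (fun p => G.ψ p.1)).sum)
        (K + (L.map (fun p => G.ψ p.2)).sum) := by
  induction L with
  | nil => intro K; exact Relation.ReflTransGen.refl
  | cons p L ih =>
    intro K
    have hp := hL p List.mem_cons_self
    have hrest := fun q hq => hL q (List.mem_cons_of_mem p hq)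
    simp only [List.map_cons, List.sum_cons]
    have e1 : K + (G.ψ p.1 + (L.map (fun p => G.ψ p.1)).sum)
        = (K + (L.map (fun p => G.ψ p.1)).sum) + G.ψ p.1 := by abel
    have e2 : (K + (L.map (fun p => G.ψ p.1)).sum) + G.ψ p.2
        = (K + G.ψ p.2) + (L.map (fun p => G.ψ p.1)).sum := by abel
    have e3 : K + (G.ψ p.2 + (L.map (fun p => G.ψ p.2)).sum)
        = (K + G.ψ p.2) + (L.map (fun p => G.ψ p.2)).sum := by abel
    have step : (fun a b => G.eventEdge a b ∨ G.eventEdge b a)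
        (K + (G.ψ p.1 + (L.map (fun p => G.ψ p.1)).sum))
        ((K + G.ψ p.2) + (L.map (fun p => G.ψ p.1)).sum) := by
      rcases hp with he | he
      · exact Or.inl ⟨p.1, p.2, K + (L.map (fun p => G.ψ p.1)).sum, he, e1, e2.symm⟩
      · exact Or.inr ⟨p.2, p.1, K + (L.map (fun p => G.ψ p.1)).sum, he, e2.symm, e1⟩
    rw [e3]
    exact Relation.ReflTransGen.head step (ih hrest (K + G.ψ p.2))

lemma flatMap_sum_diff (G : CRN s) {n : ℕ} (a b : Fin n → Fin G.n) (c : Fin n → ℤ)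
    (is : List (Fin n)) (t : Fin s) :
    ((((is.flatMap fun i => List.replicate (c i).natAbs
        (if 0 ≤ c i then (a i, b i) else (b i, a i))).map fun pr => G.ψ pr.2).sum t : ℤ))
      - (((is.flatMap fun i => List.replicate (c i).natAbs
        (if 0 ≤ c i then (a i, b i) else (b i, a i))).map fun pr => G.ψ pr.1).sum t)
      = (is.map fun i => c i * ((G.ψ (b i) t : ℤ) - (G.ψ (a i) t : ℤ))).sum := by
  induction is with
  | nil => simp
  | cons i is ih =>
    simp only [List.flatMap_cons, List.map_append, List.sum_append, List.map_cons,
      List.sum_cons, List.map_replicate, List.sum_replicate, Pi.add_apply,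
      Pi.smul_apply, smul_eq_mul]
    by_cases h0 : 0 ≤ c i
    · rw [if_pos h0]
      push_cast
      rw [abs_of_nonneg h0]
      linarith [ih]
    · rw [if_neg h0]
      push_cast
      rw [abs_of_neg (lt_of_not_ge h0)]
      linarith [ih]

/-- Main theorem: every weakly-reversible CRN with a critical siphon is catalytic. -/
theorem criticalSiphon_imp_catalytic {s : ℕ} (G : CRN s)
    (hwr : G.weaklyReversible) (h : ∃ Z : Set (Fin s), G.criticalSiphon Z) :
    G.catalytic := by
  classical
  obtain ⟨Z, ⟨hsiph, z, hz0, hZ, p, hp, hmem⟩⟩ := h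
  obtain ⟨t0, ht0⟩ := hsiph.1
  rw [CRN.stoich, Submodule.mem_span_set'] at hmem
  obtain ⟨n, f, g, hsum⟩ := hmem
  choose a b hab hg using fun i => (g i).2
  -- value of the combination at a coordinate
  have hzZ : ∀ t ∈ Z, z t = 0 := fun t ht => by rw [hZ] at ht; exact ht
  set v : Fin n → Fin s → ℝ := fun i t => (G.ψ (b i) t : ℝ) - (G.ψ (a i) t : ℝ)
    with hv
  have hvt : ∀ i, (g i : Fin s → ℝ) = v i := by
    intro i; rw [hg i]
  have hsum' : ∀ t ∈ Z, ∑ i, f i * v i t = p t := by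
    intro t ht
    have := congrFun hsum t
    simp only [Finset.sum_apply, Pi.smul_apply, Pi.sub_apply, smul_eq_mul] at this
    rw [hzZ t ht, sub_zero] at this
    rw [← this]
    apply Finset.sum_congr rfl
    intro i _
    rw [hvt i]
  -- choose ε
  have hZfin : Z.Finite := Set.toFinite Z
  set ZF : Finset (Fin s) := hZfin.toFinset with hZF
  have hZFne : ZF.Nonempty := ⟨t0, hZfin.mem_toFinset.mpr ht0⟩
  set A : Fin s → ℝ := fun t => ∑ i, |v i t| with hA
  have hAnn : ∀ t, 0 ≤ A t := fun t => Finset.sum_nonneg fun i _ => abs_nonneg _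
  set ε : ℝ := ZF.inf' hZFne (fun t => p t / (A t + 1)) with hε
  have hεpos : 0 < ε := by
    rw [hε, Finset.lt_inf'_iff]
    intro t _
    exact div_pos (hp t) (by linarith [hAnn t])
  choose q hq using fun i => exists_rat_near (f i) hεpos
  have hqpos : ∀ t ∈ Z, 0 < ∑ i, (q i : ℝ) * v i t := by
    intro t ht
    have htZF : t ∈ ZF := hZfin.mem_toFinset.mpr ht
    have hεle : ε ≤ p t / (A t + 1) := Finset.inf'_le _ htZF
    have hb : |∑ i, (f i - q i) * v i t| ≤ ε * A t := by
      calc |∑ i, (f i - q i) * v i t| ≤ ∑ i, |(f i - q i) * v i t| :=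
            Finset.abs_sum_le_sum_abs _ _
        _ ≤ ∑ i, ε * |v i t| := by
            apply Finset.sum_le_sum
            intro i _
            rw [abs_mul]
            exact mul_le_mul_of_nonneg_right (le_of_lt (hq i)) (abs_nonneg _)
        _ = ε * A t := by rw [hA, Finset.mul_sum]
    have hlt : ε * A t < p t := by
      have h1 : ε * A t ≤ (p t / (A t + 1)) * A t :=
        mul_le_mul_of_nonneg_right hεle (hAnn t)
      have h2 : (p t / (A t + 1)) * A t < p t := by
        rw [div_mul_eq_mul_div, div_lt_iff₀ (by linarith [hAnn t])]
        nlinarith [hp t, hAnn t]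
      linarith
    have heq : ∑ i, (q i : ℝ) * v i t = p t - ∑ i, (f i - q i) * v i t := by
      rw [← hsum' t ht, ← Finset.sum_sub_distrib]
      apply Finset.sum_congr rfl
      intro i _
      ring
    have hle := le_abs_self (∑ i, (f i - q i) * v i t)
    rw [heq]
    linarith
  -- clear denominators
  set D : ℕ := ∏ i, (q i).den with hD
  have hDpos : 0 < D := Finset.prod_pos fun i _ => (q i).pos
  set c : Fin n → ℤ := fun i => (q i).num * ((D : ℤ) / ((q i).den : ℤ)) with hc
  have hcast : ∀ i, ((c i : ℝ)) = (q i : ℝ) * D := by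
    intro i
    obtain ⟨m, hm⟩ : ((q i).den : ℤ) ∣ (D : ℤ) :=
      Int.natCast_dvd_natCast.mpr (Finset.dvd_prod_of_mem _ (Finset.mem_univ i))
    have hden : ((q i).den : ℤ) ≠ 0 := Int.natCast_ne_zero.mpr (q i).den_nz
    have hdenR : ((q i).den : ℝ) ≠ 0 := Nat.cast_ne_zero.mpr (q i).den_nz
    have hmR : (D : ℝ) = ((q i).den : ℝ) * (m : ℝ) := by exact_mod_cast hm
    rw [hc]
    simp only
    rw [hm, Int.mul_ediv_cancel_left _ hden]
    push_cast
    rw [Rat.cast_def, hmR]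
    field_simp
  have hcpos : ∀ t ∈ Z, 0 < ∑ i, (c i : ℝ) * v i t := by
    intro t ht
    have he : ∑ i, (c i : ℝ) * v i t = D * ∑ i, (q i : ℝ) * v i t := by
      rw [Finset.mul_sum]
      apply Finset.sum_congr rfl
      intro i _
      rw [hcast i]
      ring
    rw [he]
    exact mul_pos (by exact_mod_cast hDpos) (hqpos t ht)
  -- build the list of edges
  set L : List (Fin G.n × Fin G.n) := (List.finRange n).flatMap (fun i =>
    List.replicate (c i).natAbs (if 0 ≤ c i then (a i, b i) else (b i, a i)))
    with hL
  have hLedge : ∀ pr ∈ L, G.edge pr.1 pr.2 ∨ G.edge pr.2 pr.1 := by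
    intro pr hpr
    rw [hL, List.mem_flatMap] at hpr
    obtain ⟨i, _, hmem⟩ := hpr
    have hpr' := List.eq_of_mem_replicate hmem
    by_cases h0 : 0 ≤ c i
    · rw [if_pos h0] at hpr'
      subst hpr'
      exact Or.inl (hab i)
    · rw [if_neg h0] at hpr'
      subst hpr'
      exact Or.inr (hab i)
  set Sa : Fin s → ℕ := (L.map fun pr => G.ψ pr.1).sum with hSa
  set Sb : Fin s → ℕ := (L.map fun pr => G.ψ pr.2).sum with hSb
  have hconn : G.connected Sa Sb := by
    have := path_connected G L hLedge 0
    rw [zero_add, zero_add] at this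
    exact this
  have hlt : ∀ t ∈ Z, Sa t < Sb t := by
    intro t ht
    have hdiff : ((Sb t : ℤ) - Sa t)
        = ∑ i, c i * ((G.ψ (b i) t : ℤ) - (G.ψ (a i) t : ℤ)) := by
      rw [hSa, hSb, hL, flatMap_sum_diff G a b c (List.finRange n) t,
        Fin.sum_univ_def]
    have hposR : (0:ℝ) < ∑ i, (c i : ℝ) * v i t := hcpos t ht
    have hposZ : (0:ℤ) < ∑ i, c i * ((G.ψ (b i) t : ℤ) - (G.ψ (a i) t : ℤ)) := by
      have : ((∑ i, c i * ((G.ψ (b i) t : ℤ) - (G.ψ (a i) t : ℤ)) : ℤ) : ℝ)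
          = ∑ i, (c i : ℝ) * v i t := by
        push_cast
        rfl
      exact_mod_cast this ▸ hposR
    have : (Sa t : ℤ) < Sb t := by omega
    exact_mod_cast this
  refine ⟨Sa, Sb, hconn, ?_⟩
  intro hcon
  have hfree : ZFree Z (Sa - mgcd Sa Sb) := by
    intro t ht
    show Sa t - min (Sa t) (Sb t) = 0
    rw [min_eq_left (le_of_lt (hlt t ht))]
    omega
  have hNfree := connected_ZFree G Z hwr hsiph hcon hfree
  have h0 : Sb t0 - min (Sa t0) (Sb t0) = 0 := hNfree t0 ht0
  rw [min_eq_left (le_of_lt (hlt t0 ht0))] at h0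
  have := hlt t0 ht0
  omega
end

section
/- Let G be a weakly-reversible CRN. If the ideal (E_G) generated by the associated event-system is prime, then G is not catalytic. -/
open MvPolynomial Relation

variable {s : ℕ}

section AuxProof

variable {k : Type*} [CommRing k] {s : ℕ}

lemma mon_mul (a b : Fin s → ℕ) : mon k a * mon k b = mon k (a + b) := by
  have he : Finsupp.equivFunOnFinite.symm (a + b) =
      Finsupp.equivFunOnFinite.symm a + Finsupp.equivFunOnFinite.symm b := by
    ext i; simp [Finsupp.coe_equivFunOnFinite_symm]
  simp only [mon, MvPolynomial.monomial_mul, one_mul, he]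

lemma connected_symm_s12 (G : CRN s) {M N : Fin s → ℕ} (h : G.connected M N) :
    G.connected N M :=
  by
    haveI : Std.Symm (fun a b : Fin s → ℕ => G.eventEdge a b ∨ G.eventEdge b a) :=
      ⟨fun _ _ h => h.symm⟩
    exact Relation.ReflTransGen.symmetric.symm _ _ h

lemma connected_add_right (G : CRN s) {a b : Fin s → ℕ} (c : Fin s → ℕ)
    (h : G.connected a b) : G.connected (a + c) (b + c) := by
  refine Relation.ReflTransGen.lift (· + c) ?_ _ _ h
  rintro x y (⟨i, j, d, he, rfl, rfl⟩ | ⟨i, j, d, he, rfl, rfl⟩)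
  · exact Or.inl ⟨i, j, d + c, he,
      by show d + G.ψ i + c = d + c + G.ψ i; exact add_right_comm d (G.ψ i) c,
      by show d + G.ψ j + c = d + c + G.ψ j; exact add_right_comm d (G.ψ j) c⟩
  · exact Or.inr ⟨i, j, d + c, he,
      by show d + G.ψ i + c = d + c + G.ψ i; exact add_right_comm d (G.ψ i) c,
      by show d + G.ψ j + c = d + c + G.ψ j; exact add_right_comm d (G.ψ j) c⟩

/-- The relation generating the event congruence. -/
def CRN.erel (G : CRN s) (a b : Fin s →₀ ℕ) : Prop :=
  ∃ i j, (G.edge i j ∨ G.edge j i) ∧ a = Finsupp.equivFunOnFinite.symm (G.ψ i) ∧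
    b = Finsupp.equivFunOnFinite.symm (G.ψ j)

/-- Connectivity in the event graph, as an additive congruence on exponent vectors. -/
def CRN.conCon (G : CRN s) : AddCon (Fin s →₀ ℕ) where
  r a b := G.connected a b
  iseqv := ⟨fun _ => Relation.ReflTransGen.refl, fun h => connected_symm_s12 _ h,
    fun h h' => Relation.ReflTransGen.trans h h'⟩
  add' := by
    intro w x y z h1 h2
    have e1 : G.connected (⇑w + ⇑y) (⇑x + ⇑y) := connected_add_right G _ h1
    have e2 : G.connected (⇑y + ⇑x) (⇑z + ⇑x) := connected_add_right G _ h2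
    have e2' : G.connected (⇑x + ⇑y) (⇑x + ⇑z) := by
      rwa [add_comm ⇑y, add_comm ⇑z] at e2
    have : G.connected (⇑w + ⇑y) (⇑x + ⇑z) := e1.trans e2'
    simpa using this

lemma erel_le_conCon (G : CRN s) : ∀ a b, G.erel a b → G.conCon a b := by
  rintro a b ⟨i, j, he, rfl, rfl⟩
  refine Relation.ReflTransGen.single ?_
  have hc : ∀ f : Fin s → ℕ, ⇑(Finsupp.equivFunOnFinite.symm f) = f := fun f => by
    ext i; simp [Finsupp.coe_equivFunOnFinite_symm]
  rcases he with he | he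
  · exact Or.inl ⟨i, j, 0, he, by rw [hc]; exact (zero_add _).symm,
      by rw [hc]; exact (zero_add _).symm⟩
  · exact Or.inr ⟨j, i, 0, he, by rw [hc]; exact (zero_add _).symm,
      by rw [hc]; exact (zero_add _).symm⟩

lemma connected_mem (G : CRN s) {M N : Fin s → ℕ} (h : G.connected M N) :
    mon k M - mon k N ∈ G.eventIdeal k := by
  induction h with
  | refl => simp
  | tail hst hstep ih =>
      rename_i b c
      have hbc : mon k b - mon k c ∈ G.eventIdeal k := by
        rcases hstep with ⟨i, j, d, he, hb, hc⟩ | ⟨i, j, d, he, hc, hb⟩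
        · have hgen : mon k (G.ψ i) - mon k (G.ψ j) ∈ G.eventIdeal k :=
            Ideal.subset_span ⟨i, j, Or.inl he, rfl⟩
          have : mon k d * (mon k (G.ψ i) - mon k (G.ψ j)) ∈ G.eventIdeal k :=
            Ideal.mul_mem_left _ _ hgen
          rwa [mul_sub, mon_mul, mon_mul, ← hb, ← hc] at this
        · have hgen : mon k (G.ψ j) - mon k (G.ψ i) ∈ G.eventIdeal k :=
            Ideal.subset_span ⟨j, i, Or.inr he, rfl⟩
          have : mon k d * (mon k (G.ψ j) - mon k (G.ψ i)) ∈ G.eventIdeal k :=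
            Ideal.mul_mem_left _ _ hgen
          rwa [mul_sub, mon_mul, mon_mul, ← hb, ← hc] at this
      have := Ideal.add_mem _ ih hbc
      simpa using this

lemma mon_not_mem [Nontrivial k] (G : CRN s) (a : Fin s → ℕ) :
    mon k a ∉ G.eventIdeal k := by
  intro h
  have hle : G.eventIdeal k ≤ RingHom.ker (MvPolynomial.eval (fun _ : Fin s => (1 : k))) := by
    rw [CRN.eventIdeal, Ideal.span_le]
    rintro p ⟨i, j, _, rfl⟩
    simp [RingHom.mem_ker, mon, MvPolynomial.eval_monomial, Finsupp.prod]
  have := hle h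
  simp [RingHom.mem_ker, mon, MvPolynomial.eval_monomial, Finsupp.prod] at this

lemma mem_connected [Nontrivial k] (G : CRN s) {M N : Fin s → ℕ}
    (h : mon k M - mon k N ∈ G.eventIdeal k) : G.connected M N := by
  set c := addConGen G.erel with hcdef
  let φ : MvPolynomial (Fin s) k →+* AddMonoidAlgebra k c.Quotient :=
    AddMonoidAlgebra.mapDomainRingHom k c.mk'
  have hφmon : ∀ a : Fin s → ℕ, φ (mon k a) =
      AddMonoidAlgebra.single ((Finsupp.equivFunOnFinite.symm a : Fin s →₀ ℕ) : c.Quotient) (1 : k) := by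
    intro a
    rw [mon, ← MvPolynomial.single_eq_monomial]
    exact AddMonoidAlgebra.mapDomain_single
  have hker : G.eventIdeal k ≤ RingHom.ker φ := by
    rw [CRN.eventIdeal, Ideal.span_le]
    rintro p ⟨i, j, he, rfl⟩
    have hrel : c (Finsupp.equivFunOnFinite.symm (G.ψ i))
        (Finsupp.equivFunOnFinite.symm (G.ψ j)) :=
      AddConGen.Rel.of _ _ ⟨i, j, he, rfl, rfl⟩
    have heq : ((Finsupp.equivFunOnFinite.symm (G.ψ i) : Fin s →₀ ℕ) : c.Quotient) =
        ((Finsupp.equivFunOnFinite.symm (G.ψ j) : Fin s →₀ ℕ) : c.Quotient) :=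
      (AddCon.eq c).2 hrel
    simp only [SetLike.mem_coe, RingHom.mem_ker, map_sub, hφmon, heq, sub_self]
  have h0 : φ (mon k M - mon k N) = 0 := hker h
  rw [map_sub, hφmon, hφmon, sub_eq_zero] at h0
  have hMN : ((Finsupp.equivFunOnFinite.symm M : Fin s →₀ ℕ) : c.Quotient) =
      ((Finsupp.equivFunOnFinite.symm N : Fin s →₀ ℕ) : c.Quotient) := by
    rcases AddMonoidAlgebra.single_inj.1 h0 with ⟨h1, _⟩ | ⟨h1, _⟩
    · exact h1
    · exact absurd h1 one_ne_zero
  have hc : c (Finsupp.equivFunOnFinite.symm M) (Finsupp.equivFunOnFinite.symm N) :=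
    (AddCon.eq c).1 hMN
  have hcc : G.conCon (Finsupp.equivFunOnFinite.symm M) (Finsupp.equivFunOnFinite.symm N) :=
    AddCon.addConGen_le.2 (erel_le_conCon G) hc
  have hcoe : ∀ f : Fin s → ℕ, ⇑(Finsupp.equivFunOnFinite.symm f) = f := fun f => by
    ext i; simp [Finsupp.coe_equivFunOnFinite_symm]
  have : G.connected ⇑(Finsupp.equivFunOnFinite.symm M) ⇑(Finsupp.equivFunOnFinite.symm N) := hcc
  rwa [hcoe, hcoe] at this

end AuxProof

/-- If `(E_G)` is prime then `G` is not catalytic. -/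
theorem prime_eventIdeal_not_catalytic {k : Type*} [Field k] [CharZero k] {s : ℕ}
    (G : CRN s) (hwr : G.weaklyReversible) (hP : (G.eventIdeal k).IsPrime) :
    ¬ G.catalytic := by
  rintro ⟨M, N, hc, hnc⟩
  set g := mgcd M N with hg
  have hM : g + (M - g) = M := by
    funext i
    have : g i ≤ M i := min_le_left _ _
    simp only [Pi.add_apply, Pi.sub_apply]
    omega
  have hN : g + (N - g) = N := by
    funext i
    have : g i ≤ N i := min_le_right _ _
    simp only [Pi.add_apply, Pi.sub_apply]
    omega
  have key : mon k g * (mon k (M - g) - mon k (N - g)) = mon k M - mon k N := by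
    rw [mul_sub, mon_mul, mon_mul, hM, hN]
  have hmem : mon k g * (mon k (M - g) - mon k (N - g)) ∈ G.eventIdeal k := by
    rw [key]; exact connected_mem G hc
  rcases hP.mem_or_mem hmem with h | h
  · exact mon_not_mem G g h
  · exact hnc (mem_connected G h)
end

section
/- Let G be an atomic weakly-reversible CRN. Then the ideal (E_G) is prime; in fact k[x_1,...,x_s]/(E_G) is isomorphic to the polynomial ring on the atoms of G. -/
open MvPolynomial Relation

variable {s : ℕ}

/-- `x_i` is an atom of `G`: the monomial `x_i` is an isolated node of the
event-graph. -/
def CRN.isAtomSpecies {s : ℕ} (G : CRN s) (i : Fin s) : Prop :=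
  ∀ M : Fin s → ℕ, ¬ G.eventEdge (Pi.single i 1) M ∧ ¬ G.eventEdge M (Pi.single i 1)

/-- An atomic monomial: all its variables are atoms. -/
def CRN.atomicMon {s : ℕ} (G : CRN s) (M : Fin s → ℕ) : Prop :=
  ∀ j, M j ≠ 0 → G.isAtomSpecies j

/-- `G` is atomic: every connected component of the event-graph contains
exactly one atomic monomial. -/
def CRN.atomic {s : ℕ} (G : CRN s) : Prop :=
  ∀ M : Fin s → ℕ, ∃! A : Fin s → ℕ, G.atomicMon A ∧ G.connected M A

section AuxProof

variable {s : ℕ}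

namespace CRNproof

/-- translation invariance of event edges -/
lemma eventEdge_add (G : CRN s) {M N : Fin s → ℕ} (c : Fin s → ℕ)
    (h : G.eventEdge M N) : G.eventEdge (M + c) (N + c) := by
  obtain ⟨i, j, e, hij, hM, hN⟩ := h
  exact ⟨i, j, e + c, hij, by rw [hM, add_right_comm], by rw [hN, add_right_comm]⟩

lemma connected_symm (G : CRN s) : Symmetric G.connected :=
  fun _ _ h => (@Relation.ReflTransGen.stdSymm _ _ ⟨fun _ _ h => h.symm⟩).symm _ _ h

lemma connected_add (G : CRN s) {M N : Fin s → ℕ} (c : Fin s → ℕ)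
    (h : G.connected M N) : G.connected (M + c) (N + c) :=
  Relation.ReflTransGen.lift (· + c)
    (fun _ _ h => Or.imp (eventEdge_add G c) (eventEdge_add G c) h) _ _ h

variable (G : CRN s) (hat : G.atomic)

/-- the decomposition map -/
noncomputable def dec (M : Fin s → ℕ) : Fin s → ℕ := (hat M).choose

lemma dec_atomicMon (M : Fin s → ℕ) : G.atomicMon (dec G hat M) :=
  (hat M).choose_spec.1.1

lemma dec_connected (M : Fin s → ℕ) : G.connected M (dec G hat M) :=
  (hat M).choose_spec.1.2

lemma dec_unique {M A : Fin s → ℕ} (hA : G.atomicMon A) (hc : G.connected M A) :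
    dec G hat M = A :=
  ((hat M).choose_spec.2 A ⟨hA, hc⟩).symm

lemma dec_of_atomic {A : Fin s → ℕ} (hA : G.atomicMon A) : dec G hat A = A :=
  dec_unique G hat hA Relation.ReflTransGen.refl

lemma dec_congr {M N : Fin s → ℕ} (h : G.connected M N) :
    dec G hat M = dec G hat N :=
  dec_unique G hat (dec_atomicMon G hat N) (h.trans (dec_connected G hat N))

lemma atomicMon_add {A B : Fin s → ℕ} (hA : G.atomicMon A) (hB : G.atomicMon B) :
    G.atomicMon (A + B) := by
  intro j hj
  have h' : A j ≠ 0 ∨ B j ≠ 0 := by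
    have := hj; simp only [Pi.add_apply] at this; omega
  rcases h' with h | h
  · exact hA j h
  · exact hB j h

lemma dec_add (M N : Fin s → ℕ) :
    dec G hat (M + N) = dec G hat M + dec G hat N := by
  apply dec_unique G hat
    (atomicMon_add G (dec_atomicMon G hat M) (dec_atomicMon G hat N))
  have h1 : G.connected (M + N) (dec G hat M + N) :=
    connected_add G N (dec_connected G hat M)
  have h2 : G.connected (N + dec G hat M) (dec G hat N + dec G hat M) :=
    connected_add G (dec G hat M) (dec_connected G hat N)
  rw [add_comm N, add_comm (dec G hat N)] at h2
  exact h1.trans h2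

lemma atomicMon_zero : G.atomicMon (0 : Fin s → ℕ) := fun j hj => absurd rfl hj

lemma dec_zero : dec G hat 0 = 0 := dec_of_atomic G hat (atomicMon_zero G)

lemma dec_smul (n : ℕ) (M : Fin s → ℕ) :
    dec G hat (n • M) = n • dec G hat M := by
  induction n with
  | zero => simpa using dec_zero G hat
  | succ n ih => rw [succ_nsmul, succ_nsmul, dec_add G hat, ih]

/-- monomial in the polynomial ring on atoms -/
noncomputable def amon (k : Type*) [CommRing k] (A : Fin s → ℕ) :
    MvPolynomial {i : Fin s // G.isAtomSpecies i} k :=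
  MvPolynomial.monomial (Finsupp.equivFunOnFinite.symm fun j => A j.1) 1

variable (k : Type*) [CommRing k]

lemma amon_add (A B : Fin s → ℕ) :
    amon G k (A + B) = amon G k A * amon G k B := by
  have he : (Finsupp.equivFunOnFinite.symm fun j : {i : Fin s // G.isAtomSpecies i} => (A + B) j.1)
      = (Finsupp.equivFunOnFinite.symm fun j : {i : Fin s // G.isAtomSpecies i} => A j.1)
        + (Finsupp.equivFunOnFinite.symm fun j : {i : Fin s // G.isAtomSpecies i} => B j.1) := by
    ext j; simp
  rw [amon, amon, amon, MvPolynomial.monomial_mul, mul_one, he]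

lemma amon_zero : amon G k 0 = 1 := by
  rw [amon]
  have : (Finsupp.equivFunOnFinite.symm fun j : {i : Fin s // G.isAtomSpecies i} =>
      (0 : Fin s → ℕ) j.1) = 0 := by ext j; simp
  rw [this, MvPolynomial.monomial_zero']
  simp

lemma mon_add (A B : Fin s → ℕ) : mon k (A + B) = mon k A * mon k B := by
  have he : (Finsupp.equivFunOnFinite.symm (A + B))
      = Finsupp.equivFunOnFinite.symm A + Finsupp.equivFunOnFinite.symm B := by
    ext j; simp
  rw [mon, mon, mon, MvPolynomial.monomial_mul, mul_one, he]

lemma mon_zero : mon k (0 : Fin s → ℕ) = 1 := by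
  rw [mon]
  have : (Finsupp.equivFunOnFinite.symm (0 : Fin s → ℕ)) = 0 := by ext j; simp
  rw [this, MvPolynomial.monomial_zero']
  simp

/-- generic product lemma -/
lemma prod_pow_eq {R : Type*} [CommRing R] (h : (Fin s → ℕ) → R)
    (h0 : h 0 = 1) (hadd : ∀ a b, h (a + b) = h a * h b)
    (M : Fin s → ℕ) (c : Fin s → Fin s → ℕ) :
    ∏ i, h (c i) ^ M i = h (∑ i, M i • c i) := by
  have hpow : ∀ (n : ℕ) (a : Fin s → ℕ), h (n • a) = h a ^ n := by
    intro n a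
    induction n with
    | zero => simpa using h0
    | succ n ih => rw [succ_nsmul, hadd, ih, pow_succ]
  classical
  induction (Finset.univ : Finset (Fin s)) using Finset.induction with
  | empty => simp [h0]
  | insert _ _ hx ih =>
    rw [Finset.prod_insert hx, Finset.sum_insert hx, hadd, ih, ← hpow, mul_comm]

lemma sum_single_smul (M : Fin s → ℕ) : ∑ i, M i • Pi.single i (1 : ℕ) = M := by
  funext j
  classical
  simp [Finset.sum_apply, Pi.single_apply, Finset.sum_ite_eq]

lemma dec_sum (M : Fin s → ℕ) :
    ∑ i, M i • dec G hat (Pi.single i 1) = dec G hat M := by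
  conv_rhs => rw [← sum_single_smul M]
  classical
  induction (Finset.univ : Finset (Fin s)) using Finset.induction with
  | empty => simp [dec_zero G hat]
  | insert _ _ hx ih =>
    rw [Finset.sum_insert hx, Finset.sum_insert hx, dec_add G hat, ih,
      dec_smul G hat]

end CRNproof

end AuxProof

section AuxProof2

namespace CRNproof

variable {s : ℕ} (G : CRN s) (hat : G.atomic) (k : Type*) [CommRing k]

/-- The algebra map induced by the decomposition map. -/
noncomputable def phi :
    MvPolynomial (Fin s) k →ₐ[k] MvPolynomial {i : Fin s // G.isAtomSpecies i} k :=
  MvPolynomial.aeval fun i => amon G k (dec G hat (Pi.single i 1))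

lemma phi_mon (M : Fin s → ℕ) :
    phi G hat k (mon k M) = amon G k (dec G hat M) := by
  rw [mon, phi, MvPolynomial.aeval_monomial, map_one, one_mul, Finsupp.prod_pow]
  simp only [Finsupp.coe_equivFunOnFinite_symm]
  rw [prod_pow_eq _ (amon_zero G k) (amon_add G k), dec_sum G hat]

/-- The inclusion of the polynomial ring on atoms. -/
noncomputable def iot :
    MvPolynomial {i : Fin s // G.isAtomSpecies i} k →ₐ[k] MvPolynomial (Fin s) k :=
  MvPolynomial.aeval fun j => MvPolynomial.X j.1

lemma iota_amon {A : Fin s → ℕ} (hA : G.atomicMon A) :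
    iot G k (amon G k A) = mon k A := by
  classical
  rw [amon, iot, MvPolynomial.aeval_monomial, map_one, one_mul, Finsupp.prod_pow]
  simp only [Finsupp.coe_equivFunOnFinite_symm]
  rw [mon, MvPolynomial.monomial_eq, MvPolynomial.C_1, one_mul, Finsupp.prod_pow]
  simp only [Finsupp.coe_equivFunOnFinite_symm]
  rw [← Finset.prod_subtype (Finset.univ.filter G.isAtomSpecies)
      (by simp) (fun i => MvPolynomial.X i ^ A i : Fin s → MvPolynomial (Fin s) k)]
  apply Finset.prod_filter_of_ne
  intro x _ hx
  by_cases h : A x = 0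
  · simp [h] at hx
  · exact hA x h

lemma mon_single (i : Fin s) : mon k (Pi.single i (1 : ℕ)) = MvPolynomial.X i := by
  have he : Finsupp.equivFunOnFinite.symm (Pi.single i (1 : ℕ))
      = Finsupp.single i 1 := by
    ext j
    classical
    simp [Pi.single_apply, Finsupp.single_apply, eq_comm]
  rw [mon, he]
  rfl

lemma single_atomicMon {j : Fin s} (hj : G.isAtomSpecies j) :
    G.atomicMon (Pi.single j (1 : ℕ)) := by
  intro t ht
  classical
  by_cases h : t = j
  · subst h; exact hj
  · simp [Pi.single_apply, h] at ht

lemma amon_single (j : {i : Fin s // G.isAtomSpecies i}) :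
    amon G k (Pi.single j.1 (1 : ℕ)) = MvPolynomial.X j := by
  have he : (Finsupp.equivFunOnFinite.symm
      fun t : {i : Fin s // G.isAtomSpecies i} => (Pi.single j.1 1 : Fin s → ℕ) t.1)
      = Finsupp.single j 1 := by
    ext t
    rw [Finsupp.coe_equivFunOnFinite_symm]
    classical
    by_cases h : t = j
    · subst h; simp
    · rw [Finsupp.single_apply, if_neg fun hh => h hh.symm, Pi.single_apply,
        if_neg fun hh => h (Subtype.ext hh)]
  rw [amon, he]
  rfl

lemma phi_iota (q : MvPolynomial {i : Fin s // G.isAtomSpecies i} k) :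
    phi G hat k (iot G k q) = q := by
  have h : (phi G hat k).comp (iot G k) = AlgHom.id k _ := by
    apply MvPolynomial.algHom_ext
    intro j
    simp only [AlgHom.comp_apply, AlgHom.id_apply, iot, MvPolynomial.aeval_X]
    rw [← mon_single, phi_mon,
      dec_of_atomic G hat (single_atomicMon G j.2), amon_single]
  simpa using AlgHom.congr_fun h q

lemma sub_mem_of_connected {M N : Fin s → ℕ} (h : G.connected M N) :
    mon k M - mon k N ∈ G.eventIdeal k := by
  induction h with
  | refl => simp
  | @tail b c h' step ih =>
    have hglue : mon k M - mon k c = (mon k M - mon k b) + (mon k b - mon k c) := by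
      ring
    rw [hglue]
    refine add_mem ih ?_
    rcases step with he | he
    · obtain ⟨i, j, e, hij, hb, hc⟩ := he
      rw [hb, hc, mon_add, mon_add, ← mul_sub]
      exact Ideal.mul_mem_left _ _ (Ideal.subset_span ⟨i, j, Or.inl hij, rfl⟩)
    · obtain ⟨i, j, e, hij, hc, hb⟩ := he
      rw [hb, hc, mon_add, mon_add]
      have hneg : mon k e * mon k (G.ψ j) - mon k e * mon k (G.ψ i)
          = -(mon k e * (mon k (G.ψ i) - mon k (G.ψ j))) := by ring
      rw [hneg]
      exact neg_mem (Ideal.mul_mem_left _ _ (Ideal.subset_span ⟨i, j, Or.inl hij, rfl⟩))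

lemma sub_iota_phi_mem (p : MvPolynomial (Fin s) k) :
    p - iot G k (phi G hat k p) ∈ G.eventIdeal k := by
  induction p using MvPolynomial.induction_on with
  | C a =>
    have h1 : phi G hat k (MvPolynomial.C a) = MvPolynomial.C a := by
      simp [phi, MvPolynomial.algebraMap_eq]
    have h2 : iot G k (MvPolynomial.C a) = MvPolynomial.C a := by
      simp [iot, MvPolynomial.algebraMap_eq]
    rw [h1, h2, sub_self]
    exact zero_mem _
  | add p q hp hq =>
    rw [map_add, map_add]
    have h : p + q - (iot G k (phi G hat k p) + iot G k (phi G hat k q))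
        = (p - iot G k (phi G hat k p)) + (q - iot G k (phi G hat k q)) := by ring
    rw [h]
    exact add_mem hp hq
  | mul_X p i hp =>
    rw [map_mul, map_mul]
    have key : MvPolynomial.X i - iot G k (phi G hat k (MvPolynomial.X i))
        ∈ G.eventIdeal k := by
      rw [← mon_single k i, phi_mon, iota_amon G k (dec_atomicMon G hat _)]
      exact sub_mem_of_connected G k (dec_connected G hat _)
    have h : p * MvPolynomial.X i
        - iot G k (phi G hat k p) * iot G k (phi G hat k (MvPolynomial.X i))
        = (p - iot G k (phi G hat k p)) * MvPolynomial.X i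
          + iot G k (phi G hat k p)
            * (MvPolynomial.X i - iot G k (phi G hat k (MvPolynomial.X i))) := by
      ring
    rw [h]
    exact add_mem (Ideal.mul_mem_right _ _ hp) (Ideal.mul_mem_left _ _ key)

lemma span_le_ker : G.eventIdeal k ≤ RingHom.ker (phi G hat k).toRingHom := by
  rw [CRN.eventIdeal, Ideal.span_le]
  rintro p ⟨i, j, hij, rfl⟩
  have hcon : G.connected (G.ψ i) (G.ψ j) := by
    rcases hij with h | h
    · exact Relation.ReflTransGen.single
        (Or.inl ⟨i, j, 0, h, (zero_add _).symm, (zero_add _).symm⟩)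
    · exact Relation.ReflTransGen.single
        (Or.inr ⟨j, i, 0, h, (zero_add _).symm, (zero_add _).symm⟩)
  simp only [SetLike.mem_coe, RingHom.mem_ker, AlgHom.toRingHom_eq_coe, RingHom.coe_coe]
  rw [map_sub, phi_mon, phi_mon, dec_congr G hat hcon, sub_self]

end CRNproof

end AuxProof2


/-- If `G` is atomic then `(E_G)` is prime; indeed the quotient is isomorphic to
the polynomial ring on the atoms of `G`. -/
theorem atomic_eventIdeal_prime {k : Type*} [Field k] [CharZero k] {s : ℕ}
    (G : CRN s) (hwr : G.weaklyReversible) (hat : G.atomic) :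
    (G.eventIdeal k).IsPrime ∧
    Nonempty ((MvPolynomial (Fin s) k ⧸ G.eventIdeal k) ≃+*
      MvPolynomial {i : Fin s // G.isAtomSpecies i} k) := by
  have hker : RingHom.ker (CRNproof.phi G hat k).toRingHom = G.eventIdeal k := by
    refine le_antisymm ?_ (CRNproof.span_le_ker G hat k)
    intro p hp
    have h0 : CRNproof.phi G hat k p = 0 := hp
    have hmem := CRNproof.sub_iota_phi_mem G hat k p
    rwa [h0, map_zero, sub_zero] at hmem
  have hsurj : Function.Surjective (CRNproof.phi G hat k).toRingHom :=
    fun q => ⟨CRNproof.iot G k q, CRNproof.phi_iota G hat k q⟩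
  constructor
  · rw [← hker]
    exact RingHom.ker_isPrime _
  · exact ⟨(Ideal.quotEquivOfEq hker.symm).trans
      (RingHom.quotientKerEquivOfSurjective hsurj)⟩
end

section
/- Let G be a weakly-reversible CRN and Z a siphon of G. Then the 0/1 indicator point α, with α_i = 0 for i ∈ Z and α_i = 1 otherwise, is a zero of every binomial in the associated event-system E_G. -/
open MvPolynomial Relation

variable {s : ℕ}

private lemma touch_back {s : ℕ} (G : CRN s) (Z : Set (Fin s)) (hZ : G.siphon Z)
    {a b : Fin G.n} (h : Relation.ReflTransGen G.edge a b) :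
    (∃ l ∈ Z, G.ψ b l ≠ 0) → (∃ l ∈ Z, G.ψ a l ≠ 0) := by
  induction h with
  | refl => exact id
  | tail _ e ih => exact fun ht => ih (hZ.2 _ _ e ht)

open Classical in
private lemma prod_indicator_pow_siphon {s : ℕ} (Z : Set (Fin s)) (e : Fin s → ℕ) :
    (∏ t, (Set.indicator Zᶜ (fun _ => (1 : ℝ)) t) ^ e t) =
      if ∃ l ∈ Z, e l ≠ 0 then 0 else 1 := by
  classical
  split_ifs with h
  · obtain ⟨l, hl, hel⟩ := h
    apply Finset.prod_eq_zero (Finset.mem_univ l)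
    rw [Set.indicator_of_notMem (by simpa using hl)]
    exact zero_pow hel
  · apply Finset.prod_eq_one
    intro t _
    by_cases ht : t ∈ Z
    · have : e t = 0 := by
        by_contra he; exact h ⟨t, ht, he⟩
      simp [this]
    · rw [Set.indicator_of_mem (by simpa using ht)]; simp

/-- The 0/1 indicator point of the complement of a siphon is a zero of every
binomial of the associated event-system. -/
theorem siphon_indicator_vanishes {s : ℕ} (G : CRN s) (hwr : G.weaklyReversible)
    (Z : Set (Fin s)) (hZ : G.siphon Z) :
    G.vanishesAt (Set.indicator Zᶜ (fun _ => (1 : ℝ))) := by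
  classical
  intro i j hij
  rw [prod_indicator_pow_siphon, prod_indicator_pow_siphon]
  have h1 : (∃ l ∈ Z, G.ψ j l ≠ 0) → (∃ l ∈ Z, G.ψ i l ≠ 0) := hZ.2 _ _ hij
  have h2 : (∃ l ∈ Z, G.ψ i l ≠ 0) → (∃ l ∈ Z, G.ψ j l ≠ 0) := by
    have hreach : Relation.ReflTransGen G.edge j i :=
      hwr j i (Relation.ReflTransGen.single (Or.inr hij))
    exact touch_back G Z hZ hreach
  by_cases h : ∃ l ∈ Z, G.ψ i l ≠ 0
  · rw [if_pos h, if_pos (h2 h)]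
  · rw [if_neg h, if_neg (fun hh => h (h1 hh))]
end
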